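/- arXiv:2001.00849 — 4 statements merged into one kernel-verified Lean document; each statement's English description precedes it below -/
import Mathlib

section
/- Let G be a simple graph with n ≥ 1 vertices and m edges that contains no cycle of length 4 or more. Then m ≤ (3/2)(n − 1). -/
/-- An edge-ordered graph: a finite simple graph on vertex set `Fin nv`
together with a labeling of (potential) edges.  The edge-order is the order of
the labels; the labeling is required to be injective on the edge set via
`EOGraph.Valid`. -/
structure EOGraph where
  nv : ℕ
  graph : SimpleGraph (Fin nv)
  label : Sym2 (Fin nv) → ℕ

namespace EOGraph

/-- The labeling is injective on the edge set, hence defines a linear order on the edges. -/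
def Valid (G : EOGraph) : Prop :=
  ∀ e ∈ G.graph.edgeSet, ∀ f ∈ G.graph.edgeSet, G.label e = G.label f → e = f

/-- The number of edges of an edge-ordered graph. -/
noncomputable def edges (G : EOGraph) : ℕ := G.graph.edgeSet.ncard

/-- `G.Contains H`: some subgraph of `G`, with the edge-order induced from `G`,
is isomorphic to `H` (via a graph isomorphism preserving the relative order of edges). -/
def Contains (G H : EOGraph) : Prop :=
  ∃ f : Fin H.nv ↪ Fin G.nv,
    (∀ a b, H.graph.Adj a b → G.graph.Adj (f a) (f b)) ∧
    ∀ a b c d, H.graph.Adj a b → H.graph.Adj c d →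
      (H.label s(a, b) < H.label s(c, d) ↔ G.label s(f a, f b) < G.label s(f c, f d))

/-- `G` avoids `H` if no subgraph of `G` (with the induced edge-order) is isomorphic to `H`. -/
def Avoids (G H : EOGraph) : Prop := ¬ G.Contains H

/-- `G` avoids a family if it avoids every member. -/
def AvoidsFam (G : EOGraph) (F : Set EOGraph) : Prop := ∀ H ∈ F, G.Avoids H

/-- Isomorphism of edge-ordered graphs. -/
def Iso (G H : EOGraph) : Prop :=
  ∃ f : Fin G.nv ≃ Fin H.nv,
    (∀ a b, G.graph.Adj a b ↔ H.graph.Adj (f a) (f b)) ∧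
    ∀ a b c d, G.graph.Adj a b → G.graph.Adj c d →
      (G.label s(a, b) < G.label s(c, d) ↔ H.label s(f a, f b) < H.label s(f c, f d))

end EOGraph

/-- A simple graph `G` can avoid the family `F` if some linear order on its edges
(given by a labeling injective on the edge set) makes it into an edge-ordered graph
avoiding `F`. -/
def CanAvoid {n : ℕ} (G : SimpleGraph (Fin n)) (F : Set EOGraph) : Prop :=
  ∃ L : Sym2 (Fin n) → ℕ, (EOGraph.mk n G L).Valid ∧ (EOGraph.mk n G L).AvoidsFam F

/-- The order chromatic number of a family of edge-ordered graphs: the least chromatic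
number of a finite simple graph that cannot avoid the family (`⊤` if every finite
simple graph can avoid it). -/
noncomputable def orderChrom (F : Set EOGraph) : ℕ∞ :=
  ⨅ (n : ℕ) (G : SimpleGraph (Fin n)) (_ : ¬ CanAvoid G F), G.chromaticNumber

/-- The Turán number `lex(n, F)`: the maximum number of edges of an edge-ordered graph
on `n` vertices avoiding the family `F`. -/
noncomputable def lexFam (n : ℕ) (F : Set EOGraph) : ℕ :=
  sSup {m : ℕ | ∃ G : EOGraph, G.nv = n ∧ G.Valid ∧ G.AvoidsFam F ∧ G.edges = m}

/-- Build a symmetric labeling from a function of the (min, max) of the two endpoints. -/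
def symLabel {N : ℕ} (f : Fin N → Fin N → ℕ) : Sym2 (Fin N) → ℕ :=
  Sym2.lift ⟨fun a b => f (min a b) (max a b), fun a b => by
    show f (min a b) (max a b) = f (min b a) (max b a)
    rw [min_comm, max_comm]⟩

/-- The edge-ordered path on `k` vertices `0, 1, …, k-1`, where the edge `{i, i+1}`
gets label `l[i]`. -/
def pathEO (k : ℕ) (l : List ℕ) : EOGraph where
  nv := k
  graph := SimpleGraph.fromRel (fun a b => (a : ℕ) + 1 = (b : ℕ))
  label := symLabel fun a _ => l.getD (a : ℕ) 0

section AuxNoLongCycle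
open SimpleGraph

private lemma aux_neighbor_getVert {V : Type*} {G : SimpleGraph V}
    (hcyc : ∀ (v : V) (w : G.Walk v v), w.IsCycle → w.length < 4)
    {a b y : V} (p : G.Walk a b) (hp : p.IsPath) (hy : y ∈ p.support)
    (hay : G.Adj a y) : p.getVert 1 = y ∨ p.getVert 2 = y := by
  classical
  have key : ∀ (t : G.Walk a y), t.IsPath → t.length = 1 ∨ t.length = 2 := by
    intro t ht
    by_cases he : s(a, y) ∈ t.edges
    · left
      cases t with
      | nil => exact absurd rfl hay.ne
      | cons h q =>
        rw [Walk.edges_cons, List.mem_cons] at he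
        rw [Walk.cons_isPath_iff] at ht
        rcases he with he | he
        · have : _ = y := (Sym2.congr_right.mp he).symm
          subst this
          rw [Walk.isPath_iff_eq_nil] at *
          rw [ht.1]
          simp
        · exact absurd (q.fst_mem_support_of_mem_edges he) ht.2
    · right
      have hc : (Walk.cons hay t.reverse).IsCycle := by
        rw [Walk.cons_isCycle_iff]
        exact ⟨ht.reverse, by rwa [Walk.edges_reverse, List.mem_reverse]⟩
      have h4 := hcyc a _ hc
      have h3 := hc.three_le_length
      simp only [Walk.length_cons, Walk.length_reverse] at h4 h3
      omega
  have hgv := Walk.getVert_append (p.takeUntil y hy) (p.dropUntil y hy)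
    ((p.takeUntil y hy).length)
  rw [p.take_spec hy] at hgv
  simp only [lt_irrefl, if_false, Nat.sub_self, Walk.getVert_zero] at hgv
  rcases key _ (hp.takeUntil hy) with h1 | h2
  · left; rwa [h1] at hgv
  · right; rwa [h2] at hgv

private lemma aux_four_cycle {V : Type*} {G : SimpleGraph V}
    (hcyc : ∀ (v : V) (w : G.Walk v v), w.IsCycle → w.length < 4)
    {a b c d : V} (h1 : G.Adj a b) (h2 : G.Adj b c) (h3 : G.Adj c d) (h4 : G.Adj d a)
    (hac : a ≠ c) (hbd : b ≠ d) : False := by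
  have hC : (Walk.cons h1 (Walk.cons h2 (Walk.cons h3 (Walk.cons h4 Walk.nil)))).IsCycle := by
    have n1 := h1.ne; have n2 := h2.ne; have n3 := h3.ne; have n4 := h4.ne
    simp [Walk.isCycle_def, Walk.isTrail_def, List.nodup_cons, Sym2.eq_iff]
    aesop
  have := hcyc a _ hC
  simp [Walk.length_cons] at this

open Classical in
private noncomputable def Ecnt {n : ℕ} (G : SimpleGraph (Fin n)) (s : Finset (Fin n)) : ℕ :=
  (G.edgeFinset.filter (fun e => ∀ v ∈ e, v ∈ s)).card

open Classical in
private lemma aux_del {n : ℕ} (G : SimpleGraph (Fin n)) (s : Finset (Fin n)) (v : Fin n) :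
    Ecnt G s ≤ Ecnt G (s.erase v) + (s.filter (fun w => G.Adj v w)).card := by
  set A := (G.edgeFinset.filter (fun e => ∀ w ∈ e, w ∈ s)) with hA
  have hsplit := Finset.card_filter_add_card_filter_not (s := A) (p := fun e => v ∉ e)
  have h1 : (A.filter (fun e => v ∉ e)).card ≤ Ecnt G (s.erase v) := by
    apply Finset.card_le_card
    intro e he
    simp only [hA, Finset.mem_filter] at he ⊢
    refine ⟨he.1.1, fun w hw => Finset.mem_erase.mpr ⟨?_, he.1.2 w hw⟩⟩
    rintro rfl; exact he.2 hw
  have h2 : (A.filter (fun e => ¬ v ∉ e)).card ≤ (s.filter (fun w => G.Adj v w)).card := by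
    apply Finset.card_le_card_of_injOn (fun e => if h : v ∈ e then Sym2.Mem.other' h else v)
    · intro e he
      simp only [hA, Finset.mem_coe, Finset.mem_filter, not_not] at he
      obtain ⟨⟨hef, hes⟩, hv⟩ := he
      simp only [Finset.mem_coe, dif_pos hv]
      refine Finset.mem_filter.mpr ⟨hes _ (Sym2.other_mem' hv), ?_⟩
      have := Sym2.other_spec' hv
      rw [SimpleGraph.mem_edgeFinset, ← this, SimpleGraph.mem_edgeSet] at hef
      exact hef
    · intro e1 he1 e2 he2 hfe
      simp only [hA, Finset.coe_filter, Set.mem_setOf_eq, not_not] at he1 he2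
      simp only [dif_pos he1.2, dif_pos he2.2] at hfe
      rw [← Sym2.other_spec' he1.2, ← Sym2.other_spec' he2.2, hfe]
  calc Ecnt G s = A.card := rfl
    _ = _ := hsplit.symm
    _ ≤ _ := Nat.add_le_add h1 h2
open Classical in
private lemma aux_key {n : ℕ} (hn : 1 ≤ n) (G : SimpleGraph (Fin n))
    (hcyc : ∀ (v : Fin n) (w : G.Walk v v), w.IsCycle → w.length < 4) :
    ∀ (k : ℕ) (s : Finset (Fin n)), s.card ≤ k → s.Nonempty →
      2 * Ecnt G s ≤ 3 * (s.card - 1) := by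
  intro k
  induction k with
  | zero =>
    intro s hcard hne
    have := hne.card_pos
    omega
  | succ k ih =>
    intro s hcard hne
    by_cases hE : Ecnt G s = 0
    · rw [hE]; omega
    · -- there is an edge inside s
      obtain ⟨e, he⟩ := Finset.card_pos.mp (Nat.pos_of_ne_zero hE)
      rw [Finset.mem_filter] at he
      revert he
      induction e using Sym2.ind with
      | _ x0 y0 =>
      intro he
      rw [SimpleGraph.mem_edgeFinset, SimpleGraph.mem_edgeSet] at he
      obtain ⟨hab0, hins⟩ := he
      have hx0 : x0 ∈ s := hins x0 (Sym2.mem_mk_left _ _)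
      have hy0 : y0 ∈ s := hins y0 (Sym2.mem_mk_right _ _)
      -- longest path inside s
      set PP : ℕ → Prop := fun k => ∃ (x y : Fin n) (p : G.Walk x y),
        p.IsPath ∧ (∀ v ∈ p.support, v ∈ s) ∧ p.length = k with hPP
      have hP1 : PP 1 := by
        refine ⟨x0, y0, Walk.cons hab0 Walk.nil, ?_, ?_, rfl⟩
        · simp [Walk.cons_isPath_iff, hab0.ne]
        · intro v hv
          simp only [Walk.support_cons, Walk.support_nil, List.mem_cons,
            List.mem_singleton, List.not_mem_nil, or_false] at hv
          rcases hv with rfl | rfl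
          exacts [hx0, hy0]
      have hPK : PP (Nat.findGreatest PP n) := Nat.findGreatest_spec hn hP1
      obtain ⟨a, b, p, hp, hpsub, hplen⟩ := hPK
      have hmax : ∀ (x y : Fin n) (q : G.Walk x y), q.IsPath →
          (∀ v ∈ q.support, v ∈ s) → q.length ≤ p.length := by
        intro x y q hq hqs
        rw [hplen]
        exact Nat.le_findGreatest (by simpa using hq.length_lt.le) ⟨x, y, q, hq, hqs, rfl⟩
      clear hplen
      have ha_s : a ∈ s := hpsub a p.start_mem_support
      have hs2 : 2 ≤ s.card := Finset.one_lt_card.mpr ⟨x0, hx0, y0, hy0, hab0.ne⟩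
      -- all neighbors of a in s are on p
      have hnb_sup : ∀ z ∈ s.filter (fun w => G.Adj a w), z ∈ p.support := by
        intro z hz
        rw [Finset.mem_filter] at hz
        by_contra hzs
        have hq : (Walk.cons hz.2.symm p).IsPath := Walk.cons_isPath_iff _ _ |>.mpr ⟨hp, hzs⟩
        have := hmax _ _ _ hq (by
          intro v hv
          rw [Walk.support_cons, List.mem_cons] at hv
          rcases hv with rfl | hv
          exacts [hz.1, hpsub v hv])
        simp [Walk.length_cons] at this
      have hnb_pair : s.filter (fun w => G.Adj a w) ⊆ {p.getVert 1, p.getVert 2} := by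
        intro z hz
        have hzsup := hnb_sup z hz
        rw [Finset.mem_filter] at hz
        rcases aux_neighbor_getVert hcyc p hp hzsup hz.2 with h | h <;>
          simp [Finset.mem_insert, h]
      have hdeg2 : (s.filter (fun w => G.Adj a w)).card ≤ 2 :=
        (Finset.card_le_card hnb_pair).trans
          ((Finset.card_insert_le _ _).trans (by simp))
      by_cases hdeg : (s.filter (fun w => G.Adj a w)).card ≤ 1
      · -- delete a
        have h1 := aux_del G s a
        have hce : (s.erase a).card = s.card - 1 := Finset.card_erase_of_mem ha_s
        have hne' : (s.erase a).Nonempty := Finset.card_pos.mp (by omega)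
        have h2 := ih (s.erase a) (by omega) hne'
        rw [hce] at h2
        omega
      · -- deg = 2, triangle case
        have hdeq : (s.filter (fun w => G.Adj a w)).card = 2 := by omega
        have hNeq : s.filter (fun w => G.Adj a w) = {p.getVert 1, p.getVert 2} := by
          apply Finset.eq_of_subset_of_card_le hnb_pair
          rw [hdeq]
          exact (Finset.card_insert_le _ _).trans (by simp)
        have hux_ne : p.getVert 1 ≠ p.getVert 2 := by
          intro h
          rw [h] at hNeq
          rw [hNeq] at hdeq
          simp at hdeq
        have hlen2 : 2 ≤ p.length := by
          by_contra h
          push_neg at h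
          have e2 : p.getVert 2 = b := p.getVert_of_length_le (by omega)
          have e1 : p.getVert 1 = b := p.getVert_of_length_le (by omega)
          exact hux_ne (e1.trans e2.symm)
        clear hnb_pair hnb_sup hdeg hdeg2 hE
        -- decompose p
        cases p with
        | nil => simp at hlen2
        | cons h1 p1 =>
          cases p1 with
          | nil => simp at hlen2
          | cons h2 r =>
            rename_i w1 w2
            simp only [Walk.getVert_cons_succ, Walk.getVert_zero] at hNeq hux_ne
            rw [Walk.cons_isPath_iff] at hp
            obtain ⟨hp1, ha_nsup⟩ := hp
            rw [Walk.cons_isPath_iff] at hp1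
            obtain ⟨hr, hw1_nsup⟩ := hp1
            have ha_nr : a ∉ r.support := fun h => ha_nsup
              (by rw [Walk.support_cons]; exact List.mem_cons_of_mem _ h)
            have hw1s : w1 ∈ s := by
              have := hNeq ▸ Finset.mem_insert_self w1 {w2}
              exact (Finset.mem_filter.mp this).1
            have hw2s : w2 ∈ s := hpsub w2 (by simp [Walk.support_cons])
            have haw2 : G.Adj a w2 := by
              have : w2 ∈ s.filter (fun w => G.Adj a w) := by
                rw [hNeq]; simp
              exact (Finset.mem_filter.mp this).2
            -- neighbors of w1 in s are a and w2
            have hw1nb : ∀ z ∈ s, G.Adj w1 z → z = a ∨ z = w2 := by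
              intro z hzs hzadj
              by_contra hcon
              push_neg at hcon
              obtain ⟨hza, hzw2⟩ := hcon
              by_cases hzsup : z ∈ (Walk.cons h1 (Walk.cons h2 r)).support
              · -- z on the path: get a 4-cycle
                have hzsup' : z ∈ (Walk.cons h2 r).support := by
                  rw [Walk.support_cons, List.mem_cons] at hzsup
                  rcases hzsup with rfl | h
                  exacts [absurd rfl hza, h]
                have hW : (Walk.cons h2 r).IsPath := Walk.cons_isPath_iff _ _ |>.mpr ⟨hr, hw1_nsup⟩
                rcases aux_neighbor_getVert hcyc _ hW hzsup' hzadj with hg | hg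
                · rw [Walk.getVert_cons_succ, Walk.getVert_zero] at hg
                  exact hzw2 hg.symm
                · rw [Walk.getVert_cons_succ] at hg
                  have hrlen : 1 ≤ r.length := by
                    by_contra hr0
                    push_neg at hr0
                    have : r.getVert 1 = b := r.getVert_of_length_le (by omega)
                    have hb0 : r.getVert 0 = b := r.getVert_of_length_le (by omega)
                    apply hzw2
                    rw [← hg, this, ← hb0, r.getVert_zero]
                  have hadjw2z : G.Adj w2 z := by
                    have := r.adj_getVert_succ (by omega : 0 < r.length)
                    rwa [r.getVert_zero, hg] at this
                  exact aux_four_cycle hcyc h1 (hzadj) hadjw2z.symm haw2.symm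
                    (Ne.symm hza) (h2.ne)
              · -- z off the path: longer path
                have hq : (Walk.cons hzadj.symm (Walk.cons h1.symm
                    (Walk.cons haw2 r))).IsPath := by
                  simp only [Walk.cons_isPath_iff, Walk.support_cons, List.mem_cons]
                  rw [Walk.support_cons, List.mem_cons] at hzsup
                  push_neg at hzsup
                  refine ⟨⟨⟨hr, ha_nr⟩, ?_⟩, ?_⟩
                  · push_neg
                    exact ⟨fun h => h1.ne h.symm, hw1_nsup⟩
                  · push_neg
                    have hz2 := hzsup.2
                    rw [Walk.support_cons, List.mem_cons] at hz2
                    push_neg at hz2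
                    exact ⟨fun h => hzadj.ne h.symm, hza, hz2.2⟩
                have := hmax _ _ _ hq (by
                  intro v hv
                  simp only [Walk.support_cons, List.mem_cons] at hv
                  rcases hv with rfl | rfl | rfl | hv
                  exacts [hzs, hw1s, ha_s, hpsub v (by
                    simp [Walk.support_cons, List.mem_cons, hv])])
                simp [Walk.length_cons] at this
            -- now count
            have hd1 := aux_del G s a
            have hd2 := aux_del G (s.erase a) w1
            have hfa : (s.filter (fun w => G.Adj a w)).card = 2 := hdeq
            have hfw1 : ((s.erase a).filter (fun w => G.Adj w1 w)).card ≤ 1 := by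
              have hsub : (s.erase a).filter (fun w => G.Adj w1 w) ⊆ {w2} := by
                intro z hz
                rw [Finset.mem_filter, Finset.mem_erase] at hz
                rcases hw1nb z hz.1.2 hz.2 with rfl | rfl
                · exact absurd rfl hz.1.1
                · simp
              exact (Finset.card_le_card hsub).trans (by simp)
            have hw1s' : w1 ∈ s.erase a := Finset.mem_erase.mpr ⟨h1.ne', hw1s⟩
            have hce1 : (s.erase a).card = s.card - 1 := Finset.card_erase_of_mem ha_s
            have hce2 : ((s.erase a).erase w1).card = (s.erase a).card - 1 :=
              Finset.card_erase_of_mem hw1s'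
            have hw2s'' : w2 ∈ (s.erase a).erase w1 :=
              Finset.mem_erase.mpr ⟨h2.ne', Finset.mem_erase.mpr ⟨haw2.ne', hw2s⟩⟩
            have hs3 : 3 ≤ s.card := by
              have : ({a, w1, w2} : Finset (Fin n)) ⊆ s := by
                intro z hz
                simp only [Finset.mem_insert, Finset.mem_singleton] at hz
                rcases hz with rfl | rfl | rfl
                exacts [ha_s, hw1s, hw2s]
              have hc3 : ({a, w1, w2} : Finset (Fin n)).card = 3 := by
                rw [Finset.card_insert_of_notMem (by simp [h1.ne, haw2.ne]),
                  Finset.card_insert_of_notMem (by simp [h2.ne])]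
                simp
              calc 3 = _ := hc3.symm
                _ ≤ s.card := Finset.card_le_card this
            have hne'' : ((s.erase a).erase w1).Nonempty := ⟨w2, hw2s''⟩
            have hkey := ih ((s.erase a).erase w1) (by omega) hne''
            omega


end AuxNoLongCycle

/-- A simple graph with `n ≥ 1` vertices, `m` edges and no cycle of
length 4 or more satisfies `m ≤ (3/2)(n - 1)`. -/
theorem card_edges_le_of_no_long_cycle {n : ℕ} (hn : 1 ≤ n) (G : SimpleGraph (Fin n))
    (hcyc : ∀ (v : Fin n) (w : G.Walk v v), w.IsCycle → w.length < 4) :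
    2 * G.edgeSet.ncard ≤ 3 * (n - 1) := by
  classical
  have h1 : G.edgeSet.ncard = Ecnt G Finset.univ := by
    rw [Set.ncard_eq_toFinset_card']
    unfold Ecnt
    rw [Finset.filter_true_of_mem (fun _ _ => by simp)]
    congr 1
  have hnon : Nonempty (Fin n) := ⟨⟨0, by omega⟩⟩
  have h2 := aux_key hn G hcyc n Finset.univ (by simp) Finset.univ_nonempty
  rw [h1]
  simpa using h2
end

section
/- For every positive integer n, lex(n, P_4^{132}) = lex(n, P_4^{213}) = ⌊(3/2)(n − 1)⌋; that is, the maximum number of edges of an edge-ordered graph on n vertices avoiding P_4^{132} (equivalently, avoiding P_4^{213}) is ⌊3(n−1)/2⌋. -/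
/-- The edge-ordered path `P_4^{132}` on vertices `a,b,c,d`: edge-order `ab < cd < bc`. -/
def P4_132 : EOGraph := pathEO 4 [1, 3, 2]

/-- The edge-ordered path `P_4^{213}` on vertices `a,b,c,d`: edge-order `bc < ab < cd`. -/
def P4_213 : EOGraph := pathEO 4 [2, 1, 3]


section Helper

variable {n : ℕ}

instance : DecidableRel P4_132.graph.Adj :=
  fun a b => decidable_of_iff (a ≠ b ∧ ((a:ℕ)+1 = (b:ℕ) ∨ (b:ℕ)+1 = (a:ℕ))) Iff.rfl

instance : DecidableRel P4_213.graph.Adj :=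
  fun a b => decidable_of_iff (a ≠ b ∧ ((a:ℕ)+1 = (b:ℕ) ∨ (b:ℕ)+1 = (a:ℕ))) Iff.rfl

def Bad132 (G : SimpleGraph (Fin n)) (L : Sym2 (Fin n) → ℕ) : Prop :=
  ∃ x y z w : Fin n, x ≠ z ∧ x ≠ w ∧ y ≠ w ∧
    G.Adj x y ∧ G.Adj y z ∧ G.Adj z w ∧
    L s(x,y) < L s(z,w) ∧ L s(z,w) < L s(y,z)

def Bad213 (G : SimpleGraph (Fin n)) (L : Sym2 (Fin n) → ℕ) : Prop :=
  ∃ x y z w : Fin n, x ≠ z ∧ x ≠ w ∧ y ≠ w ∧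
    G.Adj x y ∧ G.Adj y z ∧ G.Adj z w ∧
    L s(y,z) < L s(x,y) ∧ L s(x,y) < L s(z,w)

theorem contains_of_bad132 {G : SimpleGraph (Fin n)} {L : Sym2 (Fin n) → ℕ}
    (h : Bad132 G L) : (EOGraph.mk n G L).Contains P4_132 := by
  classical
  obtain ⟨x,y,z,w,hxz,hxw,hyw,axy,ayz,azw,h1,h2⟩ := h
  have hxy := axy.ne
  have hyz := ayz.ne
  have hzw := azw.ne
  have hA : L s(x,y) < L s(y,z) := h1.trans h2
  have eA : L s(y,x) = L s(x,y) := congrArg L Sym2.eq_swap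
  have eB : L s(z,y) = L s(y,z) := congrArg L Sym2.eq_swap
  have eC : L s(w,z) = L s(z,w) := congrArg L Sym2.eq_swap
  have p01 : P4_132.label s((0:Fin 4),(1:Fin 4)) = 1 := by decide
  have p10 : P4_132.label s((1:Fin 4),(0:Fin 4)) = 1 := by decide
  have p12 : P4_132.label s((1:Fin 4),(2:Fin 4)) = 3 := by decide
  have p21 : P4_132.label s((2:Fin 4),(1:Fin 4)) = 3 := by decide
  have p23 : P4_132.label s((2:Fin 4),(3:Fin 4)) = 2 := by decide
  have p32 : P4_132.label s((3:Fin 4),(2:Fin 4)) = 2 := by decide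
  have hadj : ∀ a b : Fin 4, P4_132.graph.Adj a b →
      (a = 0 ∧ b = 1) ∨ (a = 1 ∧ b = 0) ∨ (a = 1 ∧ b = 2) ∨ (a = 2 ∧ b = 1) ∨
      (a = 2 ∧ b = 3) ∨ (a = 3 ∧ b = 2) := by unfold P4_132 pathEO; decide
  have hall : ∀ i : Fin 4, i = 0 ∨ i = 1 ∨ i = 2 ∨ i = 3 := by decide
  have hinj : Function.Injective ![x,y,z,w] := by
    intro i j hij
    rcases hall i with rfl|rfl|rfl|rfl <;> rcases hall j with rfl|rfl|rfl|rfl <;>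
      simp only [Matrix.cons_val_zero, Matrix.cons_val_one, Matrix.head_cons,
        Matrix.cons_val_two, Matrix.tail_cons, Matrix.cons_val_three] at hij <;>
      first
        | rfl
        | exact absurd hij hxy | exact absurd hij hxy.symm
        | exact absurd hij hxz | exact absurd hij hxz.symm
        | exact absurd hij hxw | exact absurd hij hxw.symm
        | exact absurd hij hyz | exact absurd hij hyz.symm
        | exact absurd hij hyw | exact absurd hij hyw.symm
        | exact absurd hij hzw | exact absurd hij hzw.symm
  have hmap : ∀ a b : Fin 4, P4_132.graph.Adj a b →
      G.Adj (![x,y,z,w] a) (![x,y,z,w] b) := by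
    intro a b hab
    rcases hadj a b hab with ⟨rfl,rfl⟩|⟨rfl,rfl⟩|⟨rfl,rfl⟩|⟨rfl,rfl⟩|⟨rfl,rfl⟩|⟨rfl,rfl⟩ <;>
      simp only [Matrix.cons_val_zero, Matrix.cons_val_one, Matrix.head_cons,
        Matrix.cons_val_two, Matrix.tail_cons, Matrix.cons_val_three] <;>
      first
        | exact axy | exact axy.symm | exact ayz | exact ayz.symm | exact azw | exact azw.symm
  have hord : ∀ a b c d : Fin 4, P4_132.graph.Adj a b → P4_132.graph.Adj c d →
      (P4_132.label s(a,b) < P4_132.label s(c,d) ↔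
        L s(![x,y,z,w] a, ![x,y,z,w] b) < L s(![x,y,z,w] c, ![x,y,z,w] d)) := by
    intro a b c d hab hcd
    rcases hadj a b hab with ⟨rfl,rfl⟩|⟨rfl,rfl⟩|⟨rfl,rfl⟩|⟨rfl,rfl⟩|⟨rfl,rfl⟩|⟨rfl,rfl⟩ <;>
      rcases hadj c d hcd with ⟨rfl,rfl⟩|⟨rfl,rfl⟩|⟨rfl,rfl⟩|⟨rfl,rfl⟩|⟨rfl,rfl⟩|⟨rfl,rfl⟩ <;>
      simp only [p01, p10, p12, p21, p23, p32, Matrix.cons_val_zero, Matrix.cons_val_one,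
        Matrix.head_cons, Matrix.cons_val_two, Matrix.tail_cons, Matrix.cons_val_three,
        eA, eB, eC] <;>
      omega
  exact ⟨⟨_, hinj⟩, hmap, hord⟩

end Helper

theorem contains_of_bad213 {G : SimpleGraph (Fin n)} {L : Sym2 (Fin n) → ℕ}
    (h : Bad213 G L) : (EOGraph.mk n G L).Contains P4_213 := by
  classical
  obtain ⟨x,y,z,w,hxz,hxw,hyw,axy,ayz,azw,h1,h2⟩ := h
  have hxy := axy.ne
  have hyz := ayz.ne
  have hzw := azw.ne
  have hA : L s(y,z) < L s(z,w) := h1.trans h2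
  have eA : L s(y,x) = L s(x,y) := congrArg L Sym2.eq_swap
  have eB : L s(z,y) = L s(y,z) := congrArg L Sym2.eq_swap
  have eC : L s(w,z) = L s(z,w) := congrArg L Sym2.eq_swap
  have p01 : P4_213.label s((0:Fin 4),(1:Fin 4)) = 2 := by decide
  have p10 : P4_213.label s((1:Fin 4),(0:Fin 4)) = 2 := by decide
  have p12 : P4_213.label s((1:Fin 4),(2:Fin 4)) = 1 := by decide
  have p21 : P4_213.label s((2:Fin 4),(1:Fin 4)) = 1 := by decide
  have p23 : P4_213.label s((2:Fin 4),(3:Fin 4)) = 3 := by decide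
  have p32 : P4_213.label s((3:Fin 4),(2:Fin 4)) = 3 := by decide
  have hadj : ∀ a b : Fin 4, P4_213.graph.Adj a b →
      (a = 0 ∧ b = 1) ∨ (a = 1 ∧ b = 0) ∨ (a = 1 ∧ b = 2) ∨ (a = 2 ∧ b = 1) ∨
      (a = 2 ∧ b = 3) ∨ (a = 3 ∧ b = 2) := by unfold P4_213 pathEO; decide
  have hall : ∀ i : Fin 4, i = 0 ∨ i = 1 ∨ i = 2 ∨ i = 3 := by decide
  have hinj : Function.Injective ![x,y,z,w] := by
    intro i j hij
    rcases hall i with rfl|rfl|rfl|rfl <;> rcases hall j with rfl|rfl|rfl|rfl <;>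
      simp only [Matrix.cons_val_zero, Matrix.cons_val_one, Matrix.head_cons,
        Matrix.cons_val_two, Matrix.tail_cons, Matrix.cons_val_three] at hij <;>
      first
        | rfl
        | exact absurd hij hxy | exact absurd hij hxy.symm
        | exact absurd hij hxz | exact absurd hij hxz.symm
        | exact absurd hij hxw | exact absurd hij hxw.symm
        | exact absurd hij hyz | exact absurd hij hyz.symm
        | exact absurd hij hyw | exact absurd hij hyw.symm
        | exact absurd hij hzw | exact absurd hij hzw.symm
  have hmap : ∀ a b : Fin 4, P4_213.graph.Adj a b →
      G.Adj (![x,y,z,w] a) (![x,y,z,w] b) := by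
    intro a b hab
    rcases hadj a b hab with ⟨rfl,rfl⟩|⟨rfl,rfl⟩|⟨rfl,rfl⟩|⟨rfl,rfl⟩|⟨rfl,rfl⟩|⟨rfl,rfl⟩ <;>
      simp only [Matrix.cons_val_zero, Matrix.cons_val_one, Matrix.head_cons,
        Matrix.cons_val_two, Matrix.tail_cons, Matrix.cons_val_three] <;>
      first
        | exact axy | exact axy.symm | exact ayz | exact ayz.symm | exact azw | exact azw.symm
  have hord : ∀ a b c d : Fin 4, P4_213.graph.Adj a b → P4_213.graph.Adj c d →
      (P4_213.label s(a,b) < P4_213.label s(c,d) ↔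
        L s(![x,y,z,w] a, ![x,y,z,w] b) < L s(![x,y,z,w] c, ![x,y,z,w] d)) := by
    intro a b c d hab hcd
    rcases hadj a b hab with ⟨rfl,rfl⟩|⟨rfl,rfl⟩|⟨rfl,rfl⟩|⟨rfl,rfl⟩|⟨rfl,rfl⟩|⟨rfl,rfl⟩ <;>
      rcases hadj c d hcd with ⟨rfl,rfl⟩|⟨rfl,rfl⟩|⟨rfl,rfl⟩|⟨rfl,rfl⟩|⟨rfl,rfl⟩|⟨rfl,rfl⟩ <;>
      simp only [p01, p10, p12, p21, p23, p32, Matrix.cons_val_zero, Matrix.cons_val_one,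
        Matrix.head_cons, Matrix.cons_val_two, Matrix.tail_cons, Matrix.cons_val_three,
        eA, eB, eC] <;>
      omega
  exact ⟨⟨_, hinj⟩, hmap, hord⟩

theorem bad132_of_contains {G : SimpleGraph (Fin n)} {L : Sym2 (Fin n) → ℕ}
    (h : (EOGraph.mk n G L).Contains P4_132) : Bad132 G L := by
  obtain ⟨f, hmap, hord⟩ := h
  refine ⟨f (0:Fin 4), f (1:Fin 4), f (2:Fin 4), f (3:Fin 4),
    fun hh => (by decide : ((0:Fin 4):Fin P4_132.nv) ≠ ((2:Fin 4):Fin P4_132.nv)) (f.injective hh),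
    fun hh => (by decide : ((0:Fin 4):Fin P4_132.nv) ≠ ((3:Fin 4):Fin P4_132.nv)) (f.injective hh),
    fun hh => (by decide : ((1:Fin 4):Fin P4_132.nv) ≠ ((3:Fin 4):Fin P4_132.nv)) (f.injective hh),
    hmap (0:Fin 4) (1:Fin 4) (by unfold P4_132 pathEO; decide), hmap (1:Fin 4) (2:Fin 4) (by unfold P4_132 pathEO; decide),
    hmap (2:Fin 4) (3:Fin 4) (by unfold P4_132 pathEO; decide),
    (hord (0:Fin 4) (1:Fin 4) (2:Fin 4) (3:Fin 4) (by unfold P4_132 pathEO; decide) (by unfold P4_132 pathEO; decide)).mp (by decide),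
    (hord (2:Fin 4) (3:Fin 4) (1:Fin 4) (2:Fin 4) (by unfold P4_132 pathEO; decide) (by unfold P4_132 pathEO; decide)).mp (by decide)⟩

theorem bad213_of_contains {G : SimpleGraph (Fin n)} {L : Sym2 (Fin n) → ℕ}
    (h : (EOGraph.mk n G L).Contains P4_213) : Bad213 G L := by
  obtain ⟨f, hmap, hord⟩ := h
  refine ⟨f (0:Fin 4), f (1:Fin 4), f (2:Fin 4), f (3:Fin 4),
    fun hh => (by decide : ((0:Fin 4):Fin P4_213.nv) ≠ ((2:Fin 4):Fin P4_213.nv)) (f.injective hh),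
    fun hh => (by decide : ((0:Fin 4):Fin P4_213.nv) ≠ ((3:Fin 4):Fin P4_213.nv)) (f.injective hh),
    fun hh => (by decide : ((1:Fin 4):Fin P4_213.nv) ≠ ((3:Fin 4):Fin P4_213.nv)) (f.injective hh),
    hmap (0:Fin 4) (1:Fin 4) (by unfold P4_213 pathEO; decide), hmap (1:Fin 4) (2:Fin 4) (by unfold P4_213 pathEO; decide),
    hmap (2:Fin 4) (3:Fin 4) (by unfold P4_213 pathEO; decide),
    (hord (1:Fin 4) (2:Fin 4) (0:Fin 4) (1:Fin 4) (by unfold P4_213 pathEO; decide) (by unfold P4_213 pathEO; decide)).mp (by decide),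
    (hord (0:Fin 4) (1:Fin 4) (2:Fin 4) (3:Fin 4) (by unfold P4_213 pathEO; decide) (by unfold P4_213 pathEO; decide)).mp (by decide)⟩

theorem dich132 {G : SimpleGraph (Fin n)} {L : Sym2 (Fin n) → ℕ}
    (hV : (EOGraph.mk n G L).Valid) (hB : ¬ Bad132 G L)
    {x y z w : Fin n} (hxy : G.Adj x y) (hyz : G.Adj y z) (hzw : G.Adj z w)
    (h1 : L s(x,y) < L s(y,z)) (h2 : L s(z,w) < L s(y,z)) : x = w := by
  by_contra hxw
  have hxz : x ≠ z := by
    rintro rfl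
    rw [Sym2.eq_swap] at h1
    exact lt_irrefl _ h1
  have hyw : y ≠ w := by
    rintro rfl
    rw [Sym2.eq_swap] at h2
    exact lt_irrefl _ h2
  rcases lt_trichotomy (L s(x,y)) (L s(z,w)) with hlt | heq | hgt
  · exact hB ⟨x,y,z,w, hxz, hxw, hyw, hxy, hyz, hzw, hlt, h2⟩
  · have := hV _ ((SimpleGraph.mem_edgeSet G).mpr hxy) _ ((SimpleGraph.mem_edgeSet G).mpr hzw) heq
    rw [Sym2.eq_iff] at this
    rcases this with ⟨rfl, rfl⟩ | ⟨rfl, rfl⟩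
    · exact hxz rfl
    · exact hxw rfl
  · refine hB ⟨w,z,y,x, hyw.symm, fun hh => hxw hh.symm, hxz.symm,
      hzw.symm, hyz.symm, hxy.symm, ?_, ?_⟩
    · rw [Sym2.eq_swap, show (s(y,x) : Sym2 (Fin n)) = s(x,y) from Sym2.eq_swap]
      exact hgt
    · rw [show (s(y,x) : Sym2 (Fin n)) = s(x,y) from Sym2.eq_swap,
        show (s(z,y) : Sym2 (Fin n)) = s(y,z) from Sym2.eq_swap]
      exact h1

theorem count132 (hn : 1 ≤ n) (G : SimpleGraph (Fin n)) (L : Sym2 (Fin n) → ℕ)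
    (hV : (EOGraph.mk n G L).Valid) (hB : ¬ Bad132 G L) :
    G.edgeSet.ncard ≤ 3 * (n-1) / 2 := by
  classical
  have hfin : G.edgeSet.Finite := Set.toFinite _
  set E : Finset (Sym2 (Fin n)) := hfin.toFinset with hE
  have hmemE : ∀ e, e ∈ E ↔ e ∈ G.edgeSet := fun e => Set.Finite.mem_toFinset _
  have hcard : G.edgeSet.ncard = E.card := Set.ncard_eq_toFinset_card _ hfin
  rw [hcard]
  rcases E.eq_empty_or_nonempty with hne | hne
  · rw [hne]; simp
  obtain ⟨e1, he1, hmin⟩ := E.exists_min_image L hne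
  obtain ⟨p, q, he1pq⟩ : ∃ a b, e1 = s(a,b) := Sym2.ind (fun a b => ⟨a, b, rfl⟩) e1
  subst he1pq
  have hpq : G.Adj p q := (SimpleGraph.mem_edgeSet G).mp ((hmemE _).mp he1)
  have hinjL : ∀ e ∈ E, ∀ f ∈ E, L e = L f → e = f := by
    intro e he f hf hef
    exact hV e ((hmemE _).mp he) f ((hmemE _).mp hf) hef
  have hEadj : ∀ a b : Fin n, s(a,b) ∈ E ↔ G.Adj a b := by
    intro a b; rw [hmemE]; exact SimpleGraph.mem_edgeSet G
  have hminstrict : ∀ f ∈ E, f ≠ s(p,q) → L s(p,q) < L f := by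
    intro f hf hne'
    rcases lt_or_eq_of_le (hmin f hf) with h | h
    · exact h
    · exact absurd (hinjL _ he1 _ hf h).symm hne'
  set HS : Fin n → Sym2 (Fin n) → Prop := fun v e => ∃ x, G.Adj v x ∧ L s(v,x) < L e with hHS
  set IsLeaf : Sym2 (Fin n) → Prop := fun e => ∃ v, v ∈ e ∧ ¬ HS v e with hIsLeaf
  set Leaf : Finset (Sym2 (Fin n)) := E.filter IsLeaf with hLeaf
  set Tri : Finset (Sym2 (Fin n)) := E.filter (fun e => ¬ IsLeaf e) with hTri
  have hsplit : Leaf.card + Tri.card = E.card := Finset.card_filter_add_card_filter_not _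
  have hTriHS : ∀ e ∈ Tri, ∀ v ∈ e, HS v e := by
    intro e he v hv
    rw [hTri, Finset.mem_filter] at he
    by_contra hcon
    exact he.2 ⟨v, hv, hcon⟩
  have hTriE : ∀ e ∈ Tri, e ∈ E := fun e he => (Finset.mem_filter.mp (hTri ▸ he)).1
  have hLeafE : ∀ e ∈ Leaf, e ∈ E := fun e he => (Finset.mem_filter.mp (hLeaf ▸ he)).1
  have hsub : ∀ e ∈ Tri, ∀ u ∈ e, ∀ x x', G.Adj u x → L s(u,x) < L e →
      G.Adj u x' → L s(u,x') < L e → x = x' := by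
    intro e heT u hu x x' hax hlx hax' hlx'
    obtain ⟨t, het⟩ := Sym2.mem_iff_exists.mp hu
    subst het
    have hut : G.Adj u t := (hEadj u t).mp (hTriE _ heT)
    obtain ⟨wt, hwt, hlwt⟩ := hTriHS _ heT t (Sym2.mem_mk_right u t)
    have hx1 : x = wt := by
      refine dich132 hV hB hax.symm hut hwt ?_ hlwt
      rw [show (s(x,u) : Sym2 (Fin n)) = s(u,x) from Sym2.eq_swap]; exact hlx
    have hx2 : x' = wt := by
      refine dich132 hV hB hax'.symm hut hwt ?_ hlwt
      rw [show (s(x',u) : Sym2 (Fin n)) = s(u,x') from Sym2.eq_swap]; exact hlx'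
    rw [hx1, hx2]
  have share' : ∀ e ∈ Tri, ∀ e' ∈ Tri, ∀ v, v ∈ e → v ∈ e' → L e < L e' → False := by
    intro e heT e' heT' v hv hv' hlt
    obtain ⟨u, heu⟩ := Sym2.mem_iff_exists.mp hv
    subst heu
    have hvu : G.Adj v u := (hEadj v u).mp (hTriE _ heT)
    obtain ⟨x, hax, hlx⟩ := hTriHS _ heT v (Sym2.mem_mk_left v u)
    have : x = u := hsub e' heT' v hv' x u hax (hlx.trans hlt) hvu hlt
    rw [this] at hlx
    exact lt_irrefl _ hlx
  have share : ∀ e ∈ Tri, ∀ e' ∈ Tri, e ≠ e' → ∀ v, v ∈ e → v ∈ e' → False := by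
    intro e heT e' heT' hne' v hv hv'
    rcases lt_trichotomy (L e) (L e') with h | h | h
    · exact share' e heT e' heT' v hv hv' h
    · exact hne' (hinjL _ (hTriE _ heT) _ (hTriE _ heT') h)
    · exact share' e' heT' e heT v hv' hv h
  have hHSp : ¬ HS p s(p,q) := by
    rintro ⟨x, hax, hlx⟩
    exact absurd (hmin _ ((hEadj p x).mpr hax)) (not_le.mpr hlx)
  -- Leaf count
  have hLeafCard : Leaf.card ≤ n - 1 := by
    have key : ∀ e : Sym2 (Fin n), ∃ v, e ∈ Leaf → (v ∈ e ∧ ¬ HS v e) ∧ v ≠ q := by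
      intro e
      by_cases he : e ∈ Leaf
      swap
      · exact ⟨p, fun h => absurd h he⟩
      obtain ⟨v, hv, hnv⟩ := (Finset.mem_filter.mp (hLeaf ▸ he)).2
      by_cases hvq : v = q
      · rw [hvq] at hv hnv
        by_cases hepq : e = s(p,q)
        · subst hepq
          exact ⟨p, fun _ => ⟨⟨Sym2.mem_mk_left p q, hHSp⟩, hpq.ne⟩⟩
        · exfalso
          apply hnv
          refine ⟨p, hpq.symm, ?_⟩
          rw [show (s(q,p) : Sym2 (Fin n)) = s(p,q) from Sym2.eq_swap]
          exact hminstrict e (hLeafE _ he) hepq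
      · exact ⟨v, fun _ => ⟨⟨hv, hnv⟩, hvq⟩⟩
    choose g hg using key
    have hmaps : ∀ e ∈ Leaf, g e ∈ Finset.univ.erase q := by
      intro e he
      exact Finset.mem_erase.mpr ⟨(hg e he).2, Finset.mem_univ _⟩
    have hinj : Set.InjOn g Leaf := by
      intro e he e' he' hgeq
      have heL := Finset.mem_coe.mp he
      have heL' := Finset.mem_coe.mp he'
      obtain ⟨⟨hv, hnHS⟩, -⟩ := hg e heL
      obtain ⟨⟨hv', hnHS'⟩, -⟩ := hg e' heL'
      obtain ⟨u, hu⟩ := Sym2.mem_iff_exists.mp hv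
      obtain ⟨u', hu'⟩ := Sym2.mem_iff_exists.mp hv'
      have hadjU : G.Adj (g e) u := by
        have hh := hLeafE _ heL
        rw [hu] at hh
        exact (hEadj _ _).mp hh
      have hadjU' : G.Adj (g e') u' := by
        have hh := hLeafE _ heL'
        rw [hu'] at hh
        exact (hEadj _ _).mp hh
      have hle1 : L e' ≤ L e := by
        by_contra hcon
        push_neg at hcon
        refine hnHS' ⟨u, ?_, ?_⟩
        · rw [hgeq] at hadjU; exact hadjU
        · rw [← hgeq, ← hu]; exact hcon
      have hle2 : L e ≤ L e' := by
        by_contra hcon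
        push_neg at hcon
        refine hnHS ⟨u', ?_, ?_⟩
        · rw [← hgeq] at hadjU'; exact hadjU'
        · rw [hgeq, ← hu']; exact hcon
      exact hinjL _ (hLeafE _ heL) _ (hLeafE _ heL') (le_antisymm hle2 hle1)
    calc Leaf.card ≤ (Finset.univ.erase q).card := Finset.card_le_card_of_injOn g hmaps hinj
      _ = n - 1 := by
        rw [Finset.card_erase_of_mem (Finset.mem_univ _), Finset.card_univ, Fintype.card_fin]
  -- Tri count
  have hTriNotMin : ∀ a b : Fin n, (∀ f ∈ E, L s(a,b) ≤ L f) → ∀ e ∈ Tri, e ≠ s(a,b) := by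
    intro a b hminab e heT hee
    subst hee
    obtain ⟨x, hax, hlx⟩ := hTriHS _ heT a (Sym2.mem_mk_left a b)
    exact absurd (hminab _ ((hEadj a x).mpr hax)) (not_le.mpr hlx)
  have inner : ∀ a b : Fin n, G.Adj a b → (∀ f ∈ E, L s(a,b) ≤ L f) →
      ∀ ea ∈ Tri, ∀ eb ∈ Tri, a ∈ ea → b ∈ eb → L ea ≤ L eb → False := by
    intro a b hab hminab ea heaT eb hebT haea hbeb hleab
    have habE : s(a,b) ∈ E := (hEadj a b).mpr hab
    have hlta : L s(a,b) < L ea := by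
      rcases lt_or_eq_of_le (hminab _ (hTriE _ heaT)) with h | h
      · exact h
      · exact absurd (hinjL _ (hTriE _ heaT) _ habE h.symm) (hTriNotMin a b hminab ea heaT)
    have hltb : L s(a,b) < L eb := by
      rcases lt_or_eq_of_le (hminab _ (hTriE _ hebT)) with h | h
      · exact h
      · exact absurd (hinjL _ (hTriE _ hebT) _ habE h.symm) (hTriNotMin a b hminab eb hebT)
    obtain ⟨t, hat⟩ := Sym2.mem_iff_exists.mp haea
    have hadjat : G.Adj a t := by
      have hh := hTriE _ heaT
      rw [hat] at hh
      exact (hEadj _ _).mp hh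
    obtain ⟨wt, hawt, hlwt⟩ := by
      refine hTriHS _ heaT t ?_
      rw [hat]; exact Sym2.mem_mk_right a t
    have hbwt : b = wt := by
      refine dich132 hV hB hab.symm hadjat ?_ ?_ ?_
      · exact hawt
      · rw [show (s(b,a) : Sym2 (Fin n)) = s(a,b) from Sym2.eq_swap, ← hat]; exact hlta
      · rw [← hat]; exact hlwt
    subst hbwt
    -- now t is adjacent to b with a small edge; apply uniqueness at b in eb
    have hlsb : L s(t,b) < L eb := lt_of_lt_of_le hlwt hleab
    have hta : t = a := by
      refine hsub eb hebT b hbeb t a hawt.symm ?_ hab.symm ?_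
      · rw [show (s(b,t) : Sym2 (Fin n)) = s(t,b) from Sym2.eq_swap]; exact hlsb
      · rw [show (s(b,a) : Sym2 (Fin n)) = s(a,b) from Sym2.eq_swap]; exact hltb
    rw [hta] at hadjat
    exact G.irrefl hadjat
  have hq0 : ∃ q₀ : Fin n, ∀ e ∈ Tri, q₀ ∉ e := by
    by_contra hcon
    push_neg at hcon
    obtain ⟨ep, hepT, hpin⟩ := hcon p
    obtain ⟨eq', heqT, hqin⟩ := hcon q
    have hminqp : ∀ f ∈ E, L s(q,p) ≤ L f := by
      intro f hf
      rw [show (s(q,p) : Sym2 (Fin n)) = s(p,q) from Sym2.eq_swap]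
      exact hmin f hf
    rcases le_total (L ep) (L eq') with h | h
    · exact inner p q hpq hmin ep hepT eq' heqT hpin hqin h
    · exact inner q p hpq.symm hminqp eq' heqT ep hepT hqin hpin h
  obtain ⟨q₀, hq₀⟩ := hq0
  have hTriCard2 : Tri.card * 2 ≤ n - 1 := by
    set S : Finset (Fin n) := Tri.biUnion (fun e => Finset.univ.filter (· ∈ e)) with hS
    have hdisj : ∀ e ∈ Tri, ∀ e' ∈ Tri, e ≠ e' →
        Disjoint (Finset.univ.filter (· ∈ e)) (Finset.univ.filter (· ∈ e')) := by
      intro e he e' he' hne'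
      rw [Finset.disjoint_left]
      intro v hv hv'
      exact share e he e' he' hne' v (Finset.mem_filter.mp hv).2 (Finset.mem_filter.mp hv').2
    have hcardS : S.card = ∑ e ∈ Tri, (Finset.univ.filter (· ∈ e)).card :=
      Finset.card_biUnion hdisj
    have hfilter2 : ∀ e ∈ Tri, (Finset.univ.filter (· ∈ e)).card = 2 := by
      intro e heT
      obtain ⟨a, b, rfl⟩ : ∃ a b, e = s(a,b) := Sym2.ind (fun a b => ⟨a, b, rfl⟩) e
      have hab : G.Adj a b := (hEadj a b).mp (hTriE _ heT)
      have : Finset.univ.filter (· ∈ s(a,b)) = {a, b} := by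
        ext v
        simp [Sym2.mem_iff]
      rw [this, Finset.card_pair hab.ne]
    have hsum : S.card = Tri.card * 2 := by
      rw [hcardS]
      exact Finset.sum_const_nat hfilter2
    have hsubset : S ⊆ Finset.univ.erase q₀ := by
      intro v hv
      obtain ⟨e, he, hvf⟩ := Finset.mem_biUnion.mp hv
      refine Finset.mem_erase.mpr ⟨?_, Finset.mem_univ _⟩
      rintro rfl
      exact hq₀ e he (Finset.mem_filter.mp hvf).2
    calc Tri.card * 2 = S.card := hsum.symm
      _ ≤ (Finset.univ.erase q₀).card := Finset.card_le_card hsubset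
      _ = n - 1 := by
        rw [Finset.card_erase_of_mem (Finset.mem_univ _), Finset.card_univ, Fintype.card_fin]
  omega

theorem count213 (hn : 1 ≤ n) (G : SimpleGraph (Fin n)) (L : Sym2 (Fin n) → ℕ)
    (hV : (EOGraph.mk n G L).Valid) (hB : ¬ Bad213 G L) :
    G.edgeSet.ncard ≤ 3 * (n-1) / 2 := by
  classical
  set C : ℕ := Finset.univ.sup L with hC
  have hle : ∀ e : Sym2 (Fin n), L e ≤ C := fun e => Finset.le_sup (Finset.mem_univ e)
  set L' : Sym2 (Fin n) → ℕ := fun e => C - L e with hL'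
  have hV' : (EOGraph.mk n G L').Valid := by
    intro e he f hf hef
    have hef' : C - L e = C - L f := hef
    have h1 := hle e
    have h2 := hle f
    have : L e = L f := by omega
    exact hV e he f hf this
  have hB' : ¬ Bad132 G L' := by
    rintro ⟨x,y,z,w,hxz,hxw,hyw,axy,ayz,azw,h1,h2⟩
    simp only [hL'] at h1 h2
    have e1 := hle s(x,y)
    have e2 := hle s(y,z)
    have e3 := hle s(z,w)
    have g1 : L s(z,w) < L s(x,y) := by omega
    have g2 : L s(y,z) < L s(z,w) := by omega
    refine hB ⟨w,z,y,x, hyw.symm, fun hh => hxw hh.symm, hxz.symm,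
      azw.symm, ayz.symm, axy.symm, ?_, ?_⟩
    · rw [show (s(z,y) : Sym2 (Fin n)) = s(y,z) from Sym2.eq_swap,
        show (s(w,z) : Sym2 (Fin n)) = s(z,w) from Sym2.eq_swap]
      exact g2
    · rw [show (s(w,z) : Sym2 (Fin n)) = s(z,w) from Sym2.eq_swap,
        show (s(y,x) : Sym2 (Fin n)) = s(x,y) from Sym2.eq_swap]
      exact g1
  exact count132 hn G L' hV' hB'

def FG (n : ℕ) : SimpleGraph (Fin n) :=
  SimpleGraph.fromRel (fun a b => (a:ℕ) = 0 ∨ ((a:ℕ) % 2 = 1 ∧ (a:ℕ) + 1 = (b:ℕ)))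

def L132 (n : ℕ) : Sym2 (Fin n) → ℕ :=
  symLabel (fun a b => if (a:ℕ) = 0 then (b:ℕ) else n + (a:ℕ))

def L213 (n : ℕ) : Sym2 (Fin n) → ℕ :=
  symLabel (fun a b => if (a:ℕ) = 0 then n + (b:ℕ) else (a:ℕ))

lemma symLabel_eval {N : ℕ} (f : Fin N → Fin N → ℕ) (a b : Fin N) :
    symLabel f s(a,b) = f (min a b) (max a b) := rfl

lemma val_min {a b : Fin n} : ((min a b : Fin n) : ℕ) = min (a:ℕ) (b:ℕ) := by
  rcases le_total a b with h | h
  · rw [min_eq_left h, min_eq_left (Fin.le_def.mp h)]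
  · rw [min_eq_right h, min_eq_right (Fin.le_def.mp h)]

lemma val_max {a b : Fin n} : ((max a b : Fin n) : ℕ) = max (a:ℕ) (b:ℕ) := by
  rcases le_total a b with h | h
  · rw [max_eq_right h, max_eq_right (Fin.le_def.mp h)]
  · rw [max_eq_left h, max_eq_left (Fin.le_def.mp h)]

lemma L132_eval (a b : Fin n) :
    L132 n s(a,b) = if min (a:ℕ) (b:ℕ) = 0 then max (a:ℕ) (b:ℕ) else n + min (a:ℕ) (b:ℕ) := by
  rw [L132, symLabel_eval, val_min, val_max]

lemma L213_eval (a b : Fin n) :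
    L213 n s(a,b) = if min (a:ℕ) (b:ℕ) = 0 then n + max (a:ℕ) (b:ℕ) else min (a:ℕ) (b:ℕ) := by
  rw [L213, symLabel_eval, val_min, val_max]

lemma FG_adj {a b : Fin n} : (FG n).Adj a b ↔
    (a:ℕ) ≠ (b:ℕ) ∧ (((a:ℕ) = 0 ∨ ((a:ℕ) % 2 = 1 ∧ (a:ℕ) + 1 = (b:ℕ))) ∨
      ((b:ℕ) = 0 ∨ ((b:ℕ) % 2 = 1 ∧ (b:ℕ) + 1 = (a:ℕ)))) := by
  rw [FG, SimpleGraph.fromRel_adj]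
  constructor
  · rintro ⟨h1, h2⟩
    exact ⟨fun hh => h1 (Fin.ext hh), h2⟩
  · rintro ⟨h1, h2⟩
    exact ⟨fun hh => h1 (congrArg Fin.val hh), h2⟩

lemma FG_valid_132 (hn : 1 ≤ n) : (EOGraph.mk n (FG n) (L132 n)).Valid := by
  have main : ∀ e ∈ (FG n).edgeSet, ∀ f ∈ (FG n).edgeSet, L132 n e = L132 n f → e = f := ?_
  · exact main
  intro e he f hf hef
  obtain ⟨a, b, rfl⟩ : ∃ a b, e = s(a,b) := Sym2.ind (fun a b => ⟨a, b, rfl⟩) e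
  obtain ⟨c, d, rfl⟩ : ∃ a b, f = s(a,b) := Sym2.ind (fun a b => ⟨a, b, rfl⟩) f
  have hab := FG_adj.mp ((SimpleGraph.mem_edgeSet (FG n)).mp he)
  have hcd := FG_adj.mp ((SimpleGraph.mem_edgeSet (FG n)).mp hf)
  rw [L132_eval, L132_eval] at hef
  have hia := a.isLt
  have hib := b.isLt
  have hic := c.isLt
  have hid := d.isLt
  rw [Sym2.eq_iff]
  have : ((a:ℕ) = (c:ℕ) ∧ (b:ℕ) = (d:ℕ)) ∨ ((a:ℕ) = (d:ℕ) ∧ (b:ℕ) = (c:ℕ)) := by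
    rcases hab with ⟨hne, hstr⟩
    rcases hcd with ⟨hne', hstr'⟩
    by_cases h1 : min (a:ℕ) (b:ℕ) = 0 <;> by_cases h2 : min (c:ℕ) (d:ℕ) = 0 <;>
      simp only [h1, h2, if_true, if_false] at hef <;> omega
  rcases this with ⟨h1, h2⟩ | ⟨h1, h2⟩
  · exact Or.inl ⟨Fin.ext h1, Fin.ext h2⟩
  · exact Or.inr ⟨Fin.ext h1, Fin.ext h2⟩

lemma FG_valid_213 (hn : 1 ≤ n) : (EOGraph.mk n (FG n) (L213 n)).Valid := by
  have main : ∀ e ∈ (FG n).edgeSet, ∀ f ∈ (FG n).edgeSet, L213 n e = L213 n f → e = f := ?_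
  · exact main
  intro e he f hf hef
  obtain ⟨a, b, rfl⟩ : ∃ a b, e = s(a,b) := Sym2.ind (fun a b => ⟨a, b, rfl⟩) e
  obtain ⟨c, d, rfl⟩ : ∃ a b, f = s(a,b) := Sym2.ind (fun a b => ⟨a, b, rfl⟩) f
  have hab := FG_adj.mp ((SimpleGraph.mem_edgeSet (FG n)).mp he)
  have hcd := FG_adj.mp ((SimpleGraph.mem_edgeSet (FG n)).mp hf)
  rw [L213_eval, L213_eval] at hef
  have hia := a.isLt
  have hib := b.isLt
  have hic := c.isLt
  have hid := d.isLt
  rw [Sym2.eq_iff]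
  have : ((a:ℕ) = (c:ℕ) ∧ (b:ℕ) = (d:ℕ)) ∨ ((a:ℕ) = (d:ℕ) ∧ (b:ℕ) = (c:ℕ)) := by
    rcases hab with ⟨hne, hstr⟩
    rcases hcd with ⟨hne', hstr'⟩
    by_cases h1 : min (a:ℕ) (b:ℕ) = 0 <;> by_cases h2 : min (c:ℕ) (d:ℕ) = 0 <;>
      simp only [h1, h2, if_true, if_false] at hef <;> omega
  rcases this with ⟨h1, h2⟩ | ⟨h1, h2⟩
  · exact Or.inl ⟨Fin.ext h1, Fin.ext h2⟩
  · exact Or.inr ⟨Fin.ext h1, Fin.ext h2⟩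

lemma FG_noBad132 (hn : 1 ≤ n) : ¬ Bad132 (FG n) (L132 n) := by
  rintro ⟨x,y,z,w,hxz,hxw,hyw,axy,ayz,azw,h1,h2⟩
  obtain ⟨exy, cxy⟩ := FG_adj.mp axy
  obtain ⟨eyz, cyz⟩ := FG_adj.mp ayz
  obtain ⟨ezw, czw⟩ := FG_adj.mp azw
  have nxz : (x:ℕ) ≠ (z:ℕ) := fun hh => hxz (Fin.ext hh)
  have nxw : (x:ℕ) ≠ (w:ℕ) := fun hh => hxw (Fin.ext hh)
  have nyw : (y:ℕ) ≠ (w:ℕ) := fun hh => hyw (Fin.ext hh)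
  have hix := x.isLt
  have hiy := y.isLt
  have hiz := z.isLt
  have hiw := w.isLt
  simp only [L132_eval] at h1 h2
  by_cases hy : (y:ℕ) = 0
  · -- L yz = z, L zw = n + min ≥ n, but h2 : L zw < L yz
    have hz : (z:ℕ) ≠ 0 := by omega
    have hw : (w:ℕ) ≠ 0 := by omega
    rw [if_neg (by omega), if_pos (by omega)] at h2
    omega
  · by_cases hz : (z:ℕ) = 0
    · have hx : (x:ℕ) ≠ 0 := by omega
      rw [if_neg (by omega), if_pos (by omega)] at h1
      rw [if_pos (by omega), if_pos (by omega)] at h2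
      omega
    · -- y,z ≠ 0 : pure adjacency contradiction
      omega

lemma FG_noBad213 (hn : 1 ≤ n) : ¬ Bad213 (FG n) (L213 n) := by
  rintro ⟨x,y,z,w,hxz,hxw,hyw,axy,ayz,azw,h1,h2⟩
  obtain ⟨exy, cxy⟩ := FG_adj.mp axy
  obtain ⟨eyz, cyz⟩ := FG_adj.mp ayz
  obtain ⟨ezw, czw⟩ := FG_adj.mp azw
  have nxz : (x:ℕ) ≠ (z:ℕ) := fun hh => hxz (Fin.ext hh)
  have nxw : (x:ℕ) ≠ (w:ℕ) := fun hh => hxw (Fin.ext hh)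
  have nyw : (y:ℕ) ≠ (w:ℕ) := fun hh => hyw (Fin.ext hh)
  have hix := x.isLt
  have hiy := y.isLt
  have hiz := z.isLt
  have hiw := w.isLt
  simp only [L213_eval] at h1 h2
  by_cases hy : (y:ℕ) = 0
  · -- L yz = n + z ; L zw = min < n ; chain L yz < L xy < L zw
    have hz : (z:ℕ) ≠ 0 := by omega
    have hw : (w:ℕ) ≠ 0 := by omega
    rw [if_pos (by omega)] at h1
    rw [if_pos (by omega), if_neg (by omega)] at h2
    omega
  · by_cases hz : (z:ℕ) = 0
    · have hx : (x:ℕ) ≠ 0 := by omega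
      rw [if_pos (by omega), if_neg (by omega)] at h1
      omega
    · omega

def vmk (n : ℕ) (hn : 1 ≤ n) (m : ℕ) : Fin n := ⟨m % n, Nat.mod_lt _ hn⟩

lemma vmk_val {hn : 1 ≤ n} {m : ℕ} (h : m < n) : ((vmk n hn m) : ℕ) = m := Nat.mod_eq_of_lt h

def enc (n : ℕ) (hn : 1 ≤ n) (k : ℕ) : Sym2 (Fin n) :=
  if k < n - 1 then s(vmk n hn 0, vmk n hn (k+1))
  else s(vmk n hn (2*(k-(n-1))+1), vmk n hn (2*(k-(n-1))+2))

lemma FG_count (hn : 1 ≤ n) : (FG n).edgeSet.ncard = 3 * (n-1) / 2 := by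
  classical
  set K := (n-1) + (n-1)/2 with hK
  have aux : ∀ x y : Fin n, (FG n).Adj x y →
      ((x:ℕ) = 0 ∨ ((x:ℕ)%2 = 1 ∧ (x:ℕ)+1 = (y:ℕ))) →
      s(x,y) ∈ (Finset.range K).image (enc n hn) := by
    intro x y hadj hcase
    have hne := (FG_adj.mp hadj).1
    have hix := x.isLt
    have hiy := y.isLt
    rcases hcase with hx0 | ⟨hodd, hsucc⟩
    · have hy0 : (y:ℕ) ≠ 0 := by omega
      refine Finset.mem_image.mpr ⟨(y:ℕ) - 1, Finset.mem_range.mpr (by omega), ?_⟩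
      have hlt : (y:ℕ)-1 < n-1 := by omega
      rw [enc, if_pos hlt]
      have e1 : vmk n hn 0 = x := Fin.ext (by rw [vmk_val (by omega)]; omega)
      have e2 : vmk n hn ((y:ℕ)-1+1) = y := Fin.ext (by rw [vmk_val (by omega)]; omega)
      rw [e1, e2]
    · refine Finset.mem_image.mpr ⟨(n-1) + ((x:ℕ)-1)/2, Finset.mem_range.mpr (by omega), ?_⟩
      rw [enc, if_neg (by omega)]
      have e1 : vmk n hn (2*((n-1) + ((x:ℕ)-1)/2-(n-1))+1) = x :=
        Fin.ext (by rw [vmk_val (by omega)]; omega)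
      have e2 : vmk n hn (2*((n-1) + ((x:ℕ)-1)/2-(n-1))+2) = y :=
        Fin.ext (by rw [vmk_val (by omega)]; omega)
      rw [e1, e2]
  have hmem : ∀ e, e ∈ (FG n).edgeSet ↔ e ∈ (Finset.range K).image (enc n hn) := by
    intro e
    constructor
    · refine Sym2.ind (fun x y h => ?_) e
      have hadj : (FG n).Adj x y := (SimpleGraph.mem_edgeSet (FG n)).mp h
      rcases (FG_adj.mp hadj).2 with (hc | hc) | (hc | hc)
      · exact aux x y hadj (Or.inl hc)
      · exact aux x y hadj (Or.inr hc)
      · rw [Sym2.eq_swap]; exact aux y x hadj.symm (Or.inl hc)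
      · rw [Sym2.eq_swap]; exact aux y x hadj.symm (Or.inr hc)
    · intro he
      obtain ⟨k, hk, rfl⟩ := Finset.mem_image.mp he
      rw [Finset.mem_range] at hk
      by_cases hlt : k < n - 1
      · rw [enc, if_pos hlt, SimpleGraph.mem_edgeSet]
        refine FG_adj.mpr ⟨?_, Or.inl (Or.inl ?_)⟩
        · rw [vmk_val (by omega), vmk_val (by omega)]; omega
        · rw [vmk_val (by omega)]
      · rw [enc, if_neg hlt, SimpleGraph.mem_edgeSet]
        refine FG_adj.mpr ⟨?_, Or.inl (Or.inr ⟨?_, ?_⟩)⟩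
        · rw [vmk_val (by omega), vmk_val (by omega)]; omega
        · rw [vmk_val (by omega)]; omega
        · rw [vmk_val (by omega), vmk_val (by omega)]
  have hinj : Set.InjOn (enc n hn) (Finset.range K) := by
    intro k hk k' hk' heq
    have hkK := Finset.mem_range.mp (Finset.mem_coe.mp hk)
    have hkK' := Finset.mem_range.mp (Finset.mem_coe.mp hk')
    by_cases h1 : k < n - 1 <;> by_cases h2 : k' < n - 1 <;>
      rw [enc, enc] at heq <;>
      [rw [if_pos h1, if_pos h2] at heq; rw [if_pos h1, if_neg h2] at heq;
       rw [if_neg h1, if_pos h2] at heq; rw [if_neg h1, if_neg h2] at heq] <;>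
      rw [Sym2.eq_iff] at heq <;>
      rcases heq with ⟨ha, hb⟩ | ⟨ha, hb⟩ <;>
      have ha' := congrArg Fin.val ha <;>
      have hb' := congrArg Fin.val hb <;>
      simp only [vmk] at ha' hb' <;>
      (try rw [Nat.mod_eq_of_lt (by omega), Nat.mod_eq_of_lt (by omega)] at ha') <;>
      (try rw [Nat.mod_eq_of_lt (by omega), Nat.mod_eq_of_lt (by omega)] at hb') <;>
      omega
  have hset : (FG n).edgeSet = ↑((Finset.range K).image (enc n hn)) := by
    ext e
    rw [Finset.mem_coe]
    exact hmem e
  rw [hset, Set.ncard_coe_finset, Finset.card_image_of_injOn hinj, Finset.card_range]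
  omega


/-- For every positive integer `n`,
`lex(n, P_4^{132}) = lex(n, P_4^{213}) = ⌊3(n-1)/2⌋`. -/
theorem lex_P4_132_and_213 (n : ℕ) (hn : 1 ≤ n) :
    lexFam n {P4_132} = 3 * (n - 1) / 2 ∧ lexFam n {P4_213} = 3 * (n - 1) / 2 := by
  constructor
  · have hmem : (3*(n-1)/2) ∈
        {m : ℕ | ∃ G : EOGraph, G.nv = n ∧ G.Valid ∧ G.AvoidsFam {P4_132} ∧ G.edges = m} := by
      refine ⟨⟨n, FG n, L132 n⟩, rfl, FG_valid_132 hn, ?_, ?_⟩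
      · intro H hH
        rw [Set.mem_singleton_iff] at hH
        subst hH
        intro hc
        exact FG_noBad132 hn (bad132_of_contains hc)
      · exact FG_count hn
    have hub : ∀ m ∈
        {m : ℕ | ∃ G : EOGraph, G.nv = n ∧ G.Valid ∧ G.AvoidsFam {P4_132} ∧ G.edges = m},
        m ≤ 3*(n-1)/2 := by
      rintro m ⟨G', hnv, hval, hav, hedges⟩
      obtain ⟨nv, graph, label⟩ := G'
      dsimp only at hnv
      subst hnv
      have hB : ¬ Bad132 graph label := fun hb => hav P4_132 rfl (contains_of_bad132 hb)
      have hm : m = graph.edgeSet.ncard := hedges.symm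
      rw [hm]
      exact count132 hn graph label hval hB
    exact le_antisymm (csSup_le ⟨_, hmem⟩ hub) (le_csSup ⟨_, hub⟩ hmem)
  · have hmem : (3*(n-1)/2) ∈
        {m : ℕ | ∃ G : EOGraph, G.nv = n ∧ G.Valid ∧ G.AvoidsFam {P4_213} ∧ G.edges = m} := by
      refine ⟨⟨n, FG n, L213 n⟩, rfl, FG_valid_213 hn, ?_, ?_⟩
      · intro H hH
        rw [Set.mem_singleton_iff] at hH
        subst hH
        intro hc
        exact FG_noBad213 hn (bad213_of_contains hc)
      · exact FG_count hn
    have hub : ∀ m ∈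
        {m : ℕ | ∃ G : EOGraph, G.nv = n ∧ G.Valid ∧ G.AvoidsFam {P4_213} ∧ G.edges = m},
        m ≤ 3*(n-1)/2 := by
      rintro m ⟨G', hnv, hval, hav, hedges⟩
      obtain ⟨nv, graph, label⟩ := G'
      dsimp only at hnv
      subst hnv
      have hB : ¬ Bad213 graph label := fun hb => hav P4_213 rfl (contains_of_bad213 hb)
      have hm : m = graph.edgeSet.ncard := hedges.symm
      rw [hm]
      exact count213 hn graph label hval hB
    exact le_antisymm (csSup_le ⟨_, hmem⟩ hub) (le_csSup ⟨_, hub⟩ hmem)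
end

section
/- For every positive integer n, lex(n, P_5^{1423}) = n(n−1)/2 and lex(n, P_5^{2413}) = n(n−1)/2; that is, there is an edge-ordering of the complete graph K_n that avoids P_5^{1423}, and one that avoids P_5^{2413}. -/
/-- The edge-ordered path `P_5^{1423}`: edge-order `ab < cd < de < bc`. -/
def P5_1423 : EOGraph := pathEO 5 [1, 4, 2, 3]

/-- The edge-ordered path `P_5^{2413}`: edge-order `cd < ab < de < bc`. -/
def P5_2413 : EOGraph := pathEO 5 [2, 4, 1, 3]


/-- Label edge `{x, y}` by `max * n + min` of the values: order edges by larger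
endpoint, tie-broken by smaller endpoint. -/
def myLabel (n : ℕ) : Sym2 (Fin n) → ℕ :=
  Sym2.lift ⟨fun a b => max a.val b.val * n + min a.val b.val, fun a b => by
    simp [Nat.max_comm, Nat.min_comm]⟩

lemma myLabel_mk (n : ℕ) (x y : Fin n) :
    myLabel n s(x, y) = max x.val y.val * n + min x.val y.val := rfl

lemma digit_lt (n a b c d : ℕ) (hb : b < n) (hd : d < n) :
    a * n + b < c * n + d ↔ (a < c ∨ (a = c ∧ b < d)) := by
  constructor
  · intro h
    rcases Nat.lt_trichotomy a c with h' | h' | h'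
    · exact Or.inl h'
    · subst h'; exact Or.inr ⟨rfl, by omega⟩
    · exfalso; nlinarith
  · rintro (h' | ⟨rfl, h'⟩)
    · nlinarith
    · omega

lemma myLabel_lt (n : ℕ) (x y u v : Fin n) :
    myLabel n s(x, y) < myLabel n s(u, v) ↔
      (max x.val y.val < max u.val v.val ∨
        (max x.val y.val = max u.val v.val ∧ min x.val y.val < min u.val v.val)) := by
  rw [myLabel_mk, myLabel_mk]
  exact digit_lt n _ _ _ _ (lt_of_le_of_lt (min_le_left _ _) x.isLt)
    (lt_of_le_of_lt (min_le_left _ _) u.isLt)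

lemma myValid (n : ℕ) : (EOGraph.mk n ⊤ (myLabel n)).Valid := by
  intro e he f hf h
  induction e using Sym2.ind with
  | _ x y =>
    induction f using Sym2.ind with
    | _ u v =>
      simp only [SimpleGraph.mem_edgeSet, SimpleGraph.top_adj] at he hf
      have hxy : x.val ≠ y.val := fun hc => he (Fin.ext hc)
      have huv : u.val ≠ v.val := fun hc => hf (Fin.ext hc)
      have h' : myLabel n s(x, y) = myLabel n s(u, v) := h
      have e1 : ¬ (max x.val y.val < max u.val v.val ∨
          (max x.val y.val = max u.val v.val ∧ min x.val y.val < min u.val v.val)) := by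
        intro hc
        have := (myLabel_lt n x y u v).mpr hc
        omega
      have e2 : ¬ (max u.val v.val < max x.val y.val ∨
          (max u.val v.val = max x.val y.val ∧ min u.val v.val < min x.val y.val)) := by
        intro hc
        have := (myLabel_lt n u v x y).mpr hc
        omega
      have : (x.val = u.val ∧ y.val = v.val) ∨ (x.val = v.val ∧ y.val = u.val) := by omega
      rw [Sym2.eq_iff]
      rcases this with ⟨h1, h2⟩ | ⟨h1, h2⟩
      · exact Or.inl ⟨Fin.ext h1, Fin.ext h2⟩
      · exact Or.inr ⟨Fin.ext h1, Fin.ext h2⟩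

lemma path5_adj (l : List ℕ) (i j : Fin 5) (h : (i : ℕ) + 1 = (j : ℕ)) :
    (pathEO 5 l).graph.Adj i j := by
  show (SimpleGraph.fromRel _).Adj i j
  rw [SimpleGraph.fromRel_adj]
  exact ⟨fun hc => by subst hc; omega, Or.inl h⟩

lemma fin_val_ne {n : ℕ} (f : Fin 5 ↪ Fin n) (i j : Fin 5) (h : i ≠ j) :
    (f i).val ≠ (f j).val :=
  fun hc => h (f.injective (Fin.ext hc))

lemma myAvoid1423 (n : ℕ) : (EOGraph.mk n ⊤ (myLabel n)).Avoids P5_1423 := by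
  rintro ⟨f0, -, hord0⟩
  let f : Fin 5 ↪ Fin n := f0
  have hord : ∀ a b c d : Fin 5, (pathEO 5 [1, 4, 2, 3]).graph.Adj a b →
      (pathEO 5 [1, 4, 2, 3]).graph.Adj c d →
      ((pathEO 5 [1, 4, 2, 3]).label s(a, b) < (pathEO 5 [1, 4, 2, 3]).label s(c, d) ↔
        myLabel n s(f a, f b) < myLabel n s(f c, f d)) := hord0
  have h01 : (pathEO 5 [1, 4, 2, 3]).graph.Adj ((0 : Fin 5) : Fin (pathEO 5 [1, 4, 2, 3]).nv) ((1 : Fin 5)) := path5_adj _ 0 1 rfl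
  have h12 : (pathEO 5 [1, 4, 2, 3]).graph.Adj ((1 : Fin 5) : Fin (pathEO 5 [1, 4, 2, 3]).nv) ((2 : Fin 5)) := path5_adj _ 1 2 rfl
  have h23 : (pathEO 5 [1, 4, 2, 3]).graph.Adj ((2 : Fin 5) : Fin (pathEO 5 [1, 4, 2, 3]).nv) ((3 : Fin 5)) := path5_adj _ 2 3 rfl
  have h34 : (pathEO 5 [1, 4, 2, 3]).graph.Adj ((3 : Fin 5) : Fin (pathEO 5 [1, 4, 2, 3]).nv) ((4 : Fin 5)) := path5_adj _ 3 4 rfl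
  have k1 : myLabel n s(f 0, f 1) < myLabel n s(f 2, f 3) :=
    (hord 0 1 2 3 h01 h23).mp (by decide)
  have k2 : myLabel n s(f 2, f 3) < myLabel n s(f 3, f 4) :=
    (hord 2 3 3 4 h23 h34).mp (by decide)
  have k3 : myLabel n s(f 3, f 4) < myLabel n s(f 1, f 2) :=
    (hord 3 4 1 2 h34 h12).mp (by decide)
  rw [myLabel_lt] at k1 k2 k3
  have d01 := fin_val_ne f 0 1 (by decide)
  have d02 := fin_val_ne f 0 2 (by decide)
  have d03 := fin_val_ne f 0 3 (by decide)
  have d04 := fin_val_ne f 0 4 (by decide)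
  have d12 := fin_val_ne f 1 2 (by decide)
  have d13 := fin_val_ne f 1 3 (by decide)
  have d14 := fin_val_ne f 1 4 (by decide)
  have d23 := fin_val_ne f 2 3 (by decide)
  have d24 := fin_val_ne f 2 4 (by decide)
  have d34 := fin_val_ne f 3 4 (by decide)
  omega

lemma myAvoid2413 (n : ℕ) : (EOGraph.mk n ⊤ (myLabel n)).Avoids P5_2413 := by
  rintro ⟨f0, -, hord0⟩
  let f : Fin 5 ↪ Fin n := f0
  have hord : ∀ a b c d : Fin 5, (pathEO 5 [2, 4, 1, 3]).graph.Adj a b →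
      (pathEO 5 [2, 4, 1, 3]).graph.Adj c d →
      ((pathEO 5 [2, 4, 1, 3]).label s(a, b) < (pathEO 5 [2, 4, 1, 3]).label s(c, d) ↔
        myLabel n s(f a, f b) < myLabel n s(f c, f d)) := hord0
  have h01 : (pathEO 5 [2, 4, 1, 3]).graph.Adj ((0 : Fin 5) : Fin (pathEO 5 [2, 4, 1, 3]).nv) ((1 : Fin 5)) := path5_adj _ 0 1 rfl
  have h12 : (pathEO 5 [2, 4, 1, 3]).graph.Adj ((1 : Fin 5) : Fin (pathEO 5 [2, 4, 1, 3]).nv) ((2 : Fin 5)) := path5_adj _ 1 2 rfl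
  have h23 : (pathEO 5 [2, 4, 1, 3]).graph.Adj ((2 : Fin 5) : Fin (pathEO 5 [2, 4, 1, 3]).nv) ((3 : Fin 5)) := path5_adj _ 2 3 rfl
  have h34 : (pathEO 5 [2, 4, 1, 3]).graph.Adj ((3 : Fin 5) : Fin (pathEO 5 [2, 4, 1, 3]).nv) ((4 : Fin 5)) := path5_adj _ 3 4 rfl
  have k1 : myLabel n s(f 2, f 3) < myLabel n s(f 0, f 1) :=
    (hord 2 3 0 1 h23 h01).mp (by decide)
  have k2 : myLabel n s(f 0, f 1) < myLabel n s(f 3, f 4) :=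
    (hord 0 1 3 4 h01 h34).mp (by decide)
  have k3 : myLabel n s(f 3, f 4) < myLabel n s(f 1, f 2) :=
    (hord 3 4 1 2 h34 h12).mp (by decide)
  rw [myLabel_lt] at k1 k2 k3
  have d01 := fin_val_ne f 0 1 (by decide)
  have d02 := fin_val_ne f 0 2 (by decide)
  have d03 := fin_val_ne f 0 3 (by decide)
  have d04 := fin_val_ne f 0 4 (by decide)
  have d12 := fin_val_ne f 1 2 (by decide)
  have d13 := fin_val_ne f 1 3 (by decide)
  have d14 := fin_val_ne f 1 4 (by decide)
  have d23 := fin_val_ne f 2 3 (by decide)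
  have d24 := fin_val_ne f 2 4 (by decide)
  have d34 := fin_val_ne f 3 4 (by decide)
  omega

theorem lexFam_eq_of_avoid (n : ℕ) (H : EOGraph)
    (hav : (EOGraph.mk n ⊤ (myLabel n)).Avoids H) :
    lexFam n {H} = n * (n - 1) / 2 := by
  classical
  have hcard : ∀ G : EOGraph, G.nv = n → G.edges ≤ n * (n - 1) / 2 := by
    intro G hG
    have h1 : G.graph.edgeSet.ncard = G.graph.edgeFinset.card := by
      rw [SimpleGraph.edgeFinset]; exact Set.ncard_eq_toFinset_card' _
    have h2 := SimpleGraph.card_edgeFinset_le_card_choose_two (G := G.graph)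
    rw [EOGraph.edges, h1]
    calc G.graph.edgeFinset.card ≤ (Fintype.card (Fin G.nv)).choose 2 := h2
      _ = n * (n - 1) / 2 := by rw [Fintype.card_fin, hG, Nat.choose_two_right]
  have hmem : n * (n - 1) / 2 ∈
      {m : ℕ | ∃ G : EOGraph, G.nv = n ∧ G.Valid ∧ G.AvoidsFam {H} ∧ G.edges = m} := by
    refine ⟨EOGraph.mk n ⊤ (myLabel n), rfl, myValid n, ?_, ?_⟩
    · intro H' hH'; rw [Set.mem_singleton_iff] at hH'; subst hH'; exact hav
    · show ((⊤ : SimpleGraph (Fin n)).edgeSet).ncard = n * (n - 1) / 2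
      have h1 : (⊤ : SimpleGraph (Fin n)).edgeSet.ncard
          = (⊤ : SimpleGraph (Fin n)).edgeFinset.card := by
        rw [SimpleGraph.edgeFinset]; exact Set.ncard_eq_toFinset_card' _
      rw [h1, SimpleGraph.card_edgeFinset_top_eq_card_choose_two,
        Fintype.card_fin, Nat.choose_two_right]
  apply le_antisymm
  · apply csSup_le ⟨_, hmem⟩
    rintro m ⟨G, hG, -, -, rfl⟩
    exact hcard G hG
  · apply le_csSup ⟨n * (n - 1) / 2, ?_⟩ hmem
    rintro m ⟨G, hG, -, -, rfl⟩
    exact hcard G hG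

/-- For every positive integer `n`,
`lex(n, P_5^{1423}) = lex(n, P_5^{2413}) = n(n-1)/2`. -/
theorem lex_P5_1423_and_2413 (n : ℕ) (hn : 1 ≤ n) :
    lexFam n {P5_1423} = n * (n - 1) / 2 ∧ lexFam n {P5_2413} = n * (n - 1) / 2 := by
  exact ⟨lexFam_eq_of_avoid n _ (myAvoid1423 n), lexFam_eq_of_avoid n _ (myAvoid2413 n)⟩
end

section
/- For every nonnegative integer i there exists an edge-ordered graph with exactly 2^i vertices and i·2^{i−1} edges that avoids P_5^{1342}; consequently lex(n, P_5^{1342}) = Ω(n log n), i.e., there is a constant c > 0 such that lex(n, P_5^{1342}) ≥ c·n·log n for all n ≥ 2. -/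
/-- The edge-ordered path `P_5^{1342}`: edge-order `ab < de < bc < cd`. -/
def P5_1342 : EOGraph := pathEO 5 [1, 3, 4, 2]

/-! ### Auxiliary constructions and lemmas -/

namespace CubeAux

/-- bit `j` of `v` is false → `v ^^^ 2^j = v + 2^j`. -/
lemma xor_two_pow_eq_add : ∀ (j v : ℕ), v.testBit j = false → v ^^^ 2^j = v + 2^j := by
  intro j
  induction j with
  | zero =>
    intro v h
    simp only [Nat.testBit_zero, decide_eq_false_iff_not] at h
    simp only [pow_zero]
    have h2 : v % 2 = 0 := by omega
    have hm : (v ^^^ 1) % 2 = 1 := by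
      simp [Nat.xor_mod_two_eq_one]; omega
    have hd : (v ^^^ 1) / 2 = v / 2 := by
      rw [Nat.xor_div_two]; simp
    omega
  | succ j ih =>
    intro v h
    rw [Nat.testBit_add_one] at h
    have hd : (v ^^^ 2^(j+1)) / 2 = v / 2 + 2^j := by
      rw [Nat.xor_div_two]
      rw [show (2:ℕ)^(j+1)/2 = 2^j by omega]
      exact ih (v/2) h
    have hm : (v ^^^ 2^(j+1)) % 2 = v % 2 := by
      have h1 : ((v ^^^ 2^(j+1)) % 2 = 1) ↔ ¬ ((v % 2 = 1) ↔ ((2:ℕ)^(j+1) % 2 = 1)) :=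
        Nat.xor_mod_two_eq_one
      have h2 : (2:ℕ)^(j+1) % 2 = 0 := by
        simp [Nat.pow_succ, Nat.mul_mod]
      rw [h2] at h1
      omega
    have := Nat.div_add_mod (v ^^^ 2^(j+1)) 2
    have := Nat.div_add_mod v 2
    have hp : (2:ℕ)^(j+1) = 2 * 2^j := by ring
    omega

lemma testBit_add_pow_self {v j : ℕ} (h : v.testBit j = false) :
    (v + 2^j).testBit j = true := by
  rw [← xor_two_pow_eq_add j v h]
  simp [Nat.testBit_xor, Nat.testBit_two_pow_self, h]

lemma testBit_sub_pow_self {v j : ℕ} (h : v.testBit j = true) :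
    2^j ≤ v ∧ (v - 2^j).testBit j = false := by
  have hle : 2^j ≤ v := Nat.ge_two_pow_of_testBit h
  refine ⟨hle, ?_⟩
  have h2 : (2^j + (v - 2^j)).testBit j = !((v - 2^j).testBit j) :=
    Nat.testBit_two_pow_add_eq _ _
  rw [show 2^j + (v - 2^j) = v by omega, h] at h2
  cases hh : (v - 2^j).testBit j with
  | false => rfl
  | true => rw [hh] at h2; simp at h2

lemma add_pow_lt {v i j : ℕ} (hv : v < 2^i) (hj : j < i) (h : v.testBit j = false) :
    v + 2^j < 2^i := by
  rw [← xor_two_pow_eq_add j v h]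
  exact Nat.xor_lt_two_pow hv (Nat.pow_lt_pow_right (by norm_num) hj)

/-- The hypercube graph `Q_i`, placed on the first `2^i` vertices of `Fin n`. -/
def cubeG (i n : ℕ) : SimpleGraph (Fin n) where
  Adj u v := (u:ℕ) < 2^i ∧ (v:ℕ) < 2^i ∧ ∃ j < i,
    Nat.testBit (min (u:ℕ) (v:ℕ)) j = false ∧ max (u:ℕ) (v:ℕ) = min (u:ℕ) (v:ℕ) + 2^j
  symm := by
    constructor
    rintro u v ⟨h1, h2, j, hj, hb, hm⟩
    exact ⟨h2, h1, j, hj, by rwa [min_comm], by rwa [min_comm, max_comm]⟩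
  loopless := by
    constructor
    rintro u ⟨h1, h2, j, hj, hb, hm⟩
    have := Nat.two_pow_pos j
    simp only [min_self, max_self] at hm
    omega

/-- Edge labels: decreasing in the smaller endpoint, ties broken by the direction. -/
def cubeL (i n : ℕ) : Sym2 (Fin n) → ℕ :=
  Sym2.lift ⟨fun u v => (2^i - 1 - min (u:ℕ) (v:ℕ)) * i
      + Nat.log 2 (max (u:ℕ) (v:ℕ) - min (u:ℕ) (v:ℕ)),
    by intro a b; simp [min_comm, max_comm]⟩

lemma log_of_diff {u v : ℕ} {j : ℕ} (hm : max u v = min u v + 2^j) :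
    Nat.log 2 (max u v - min u v) = j := by
  rw [show max u v - min u v = 2^j by omega, Nat.log_pow (by norm_num)]

lemma cubeL_eq {i n : ℕ} {u v : Fin n} {j : ℕ}
    (hm : max (u:ℕ) (v:ℕ) = min (u:ℕ) (v:ℕ) + 2^j) :
    cubeL i n s(u, v) = (2^i - 1 - min (u:ℕ) (v:ℕ)) * i + j := by
  simp only [cubeL, Sym2.lift_mk]
  rw [show max (u:ℕ) (v:ℕ) - min (u:ℕ) (v:ℕ) = 2^j by omega, Nat.log_pow (by norm_num)]

lemma label_lt_extract {i m m' j j' : ℕ} (hj : j < i) (hj' : j' < i)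
    (hm : m ≤ 2^i - 1) (hm' : m' ≤ 2^i - 1)
    (h : (2^i - 1 - m) * i + j < (2^i - 1 - m') * i + j') :
    m' < m ∨ (m' = m ∧ j < j') := by
  set M := 2^i - 1 with hM
  rcases lt_trichotomy m m' with h1 | h1 | h1
  · exfalso
    have hq : M - m' + 1 ≤ M - m := by omega
    have : (M - m') * i + j' < (M - m' + 1) * i := by
      have : j' < i := hj'; nlinarith
    have h2 : (M - m' + 1) * i ≤ (M - m) * i := Nat.mul_le_mul_right i hq
    omega
  · right; refine ⟨h1.symm, ?_⟩; rw [h1] at h; omega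
  · left; exact h1

lemma label_eq_extract {i m m' j j' : ℕ} (hj : j < i) (hj' : j' < i)
    (hm : m ≤ 2^i - 1) (hm' : m' ≤ 2^i - 1)
    (h : (2^i - 1 - m) * i + j = (2^i - 1 - m') * i + j') : m = m' ∧ j = j' := by
  have h1 : ((2^i - 1 - m) * i + j) % i = j := by
    rw [Nat.add_comm, Nat.add_mul_mod_self_right, Nat.mod_eq_of_lt hj]
  have h2 : ((2^i - 1 - m') * i + j') % i = j' := by
    rw [Nat.add_comm, Nat.add_mul_mod_self_right, Nat.mod_eq_of_lt hj']
  have hjj : j = j' := by rw [← h1, h, h2]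
  subst hjj
  refine ⟨?_, rfl⟩
  have hmul : (2^i - 1 - m) * i = (2^i - 1 - m') * i := by omega
  have hipos : 0 < i := by omega
  have hcc := Nat.eq_of_mul_eq_mul_right hipos hmul
  set M := 2^i - 1 with hM
  omega

/-- The key combinatorial step: a path `a-b-c-d-e` in the hypercube cannot carry
the pattern `x₁ < x₄ < x₂ < x₃`. -/
lemma core {a b c d e j1 j2 j3 j4 P1 P2 P3 P4 : ℕ}
    (hP2 : 0 < P2) (hP3 : 0 < P3) (hP4 : 0 < P4)
    (I23 : j2 < j3 → 2*P2 ≤ P3)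
    (I43 : P4 < P3 → 2*P4 ≤ P3)
    (E1 : max a b = min a b + P1) (E2 : max b c = min b c + P2)
    (E3 : max c d = min c d + P3) (E4 : max d e = min d e + P4)
    (hbd : b ≠ d) (hce : c ≠ e) (hbe : b ≠ e)
    (h14 : min d e < min a b ∨ (min d e = min a b ∧ j1 < j4))
    (h42 : min b c < min d e ∨ (min b c = min d e ∧ j4 < j2))
    (h23 : min c d < min b c ∨ (min c d = min b c ∧ j2 < j3)) : False := by
  omega

/-- The hypercube labeling is injective on the edge set. -/
lemma cube_valid (i n : ℕ) : (EOGraph.mk n (cubeG i n) (cubeL i n)).Valid := by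
  rintro e he e' he' heq
  induction e using Sym2.ind with | _ u v =>
  induction e' using Sym2.ind with | _ u' v' =>
  rw [SimpleGraph.mem_edgeSet] at he he'
  obtain ⟨hu, hv, j, hj, hb, hm⟩ := he
  obtain ⟨hu', hv', j', hj', hb', hm'⟩ := he'
  have heq' : (2^i - 1 - min (u:ℕ) (v:ℕ)) * i + j
      = (2^i - 1 - min (u':ℕ) (v':ℕ)) * i + j' := by
    rw [← cubeL_eq hm, ← cubeL_eq hm']; exact heq
  have hmle : min (u:ℕ) (v:ℕ) ≤ 2^i - 1 := by omega
  have hmle' : min (u':ℕ) (v':ℕ) ≤ 2^i - 1 := by omega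
  obtain ⟨hmm, hjj⟩ := label_eq_extract hj hj' hmle hmle' heq'
  subst hjj
  obtain ⟨P, hP⟩ : ∃ P, (2:ℕ)^j = P := ⟨_, rfl⟩
  rw [hP] at hm hm'
  rw [Sym2.eq_iff]
  have hd : ((u:ℕ) = (u':ℕ) ∧ (v:ℕ) = (v':ℕ)) ∨ ((u:ℕ) = (v':ℕ) ∧ (v:ℕ) = (u':ℕ)) := by
    omega
  rcases hd with ⟨h1, h2⟩ | ⟨h1, h2⟩
  · exact Or.inl ⟨Fin.ext h1, Fin.ext h2⟩
  · exact Or.inr ⟨Fin.ext h1, Fin.ext h2⟩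

lemma degree_eq {i n : ℕ} (hn : 2^i ≤ n) (v : Fin n) [DecidableRel (cubeG i n).Adj] :
    (cubeG i n).degree v = if (v:ℕ) < 2^i then i else 0 := by
  split_ifs with hv
  · rw [← SimpleGraph.card_neighborFinset_eq_degree]
    have key : ((cubeG i n).neighborFinset v).card = (Finset.range i).card := by
      apply Finset.card_bij'
        (i := fun (w : Fin n) (_ : w ∈ (cubeG i n).neighborFinset v) =>
          Nat.log 2 (max (v:ℕ) (w:ℕ) - min (v:ℕ) (w:ℕ)))
        (j := fun (j : ℕ) (hj : j ∈ Finset.range i) =>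
          if hb : (v:ℕ).testBit j then
            (⟨(v:ℕ) - 2^j, lt_of_le_of_lt (Nat.sub_le _ _) v.isLt⟩ : Fin n)
          else (⟨(v:ℕ) + 2^j,
            lt_of_lt_of_le (add_pow_lt hv (Finset.mem_range.mp hj)
              (by simpa using hb)) hn⟩ : Fin n))
      case hi =>
        intro w hw
        rw [SimpleGraph.mem_neighborFinset] at hw
        obtain ⟨h1, h2, j, hj, hb, hm⟩ := hw
        rw [log_of_diff hm]
        exact Finset.mem_range.mpr hj
      case hj =>
        intro j hj
        rw [Finset.mem_range] at hj
        rw [SimpleGraph.mem_neighborFinset]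
        split_ifs with hb
        · obtain ⟨hle, hb'⟩ := testBit_sub_pow_self hb
          have hpos := Nat.two_pow_pos j
          refine ⟨hv, lt_of_le_of_lt (Nat.sub_le _ _) hv, j, hj, ?_, ?_⟩ <;>
            simp only [Fin.val_mk]
          · rw [min_eq_right (Nat.sub_le _ _)]; exact hb'
          · rw [min_eq_right (Nat.sub_le _ _), max_eq_left (Nat.sub_le _ _)]
            omega
        · have hb' : (v:ℕ).testBit j = false := by simpa using hb
          have hlt := add_pow_lt hv hj hb'
          refine ⟨hv, hlt, j, hj, ?_, ?_⟩ <;>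
            simp only [Fin.val_mk]
          · rw [min_eq_left (Nat.le_add_right _ _)]; exact hb'
          · rw [min_eq_left (Nat.le_add_right _ _), max_eq_right (Nat.le_add_right _ _)]
      case left_inv =>
        intro w hw
        rw [SimpleGraph.mem_neighborFinset] at hw
        obtain ⟨h1, h2, j, hj, hb, hm⟩ := hw
        simp only [log_of_diff hm]
        have hpos := Nat.two_pow_pos j
        have hne : (v:ℕ) ≠ (w:ℕ) := by
          intro h; rw [h, min_self, max_self] at hm; omega
        rcases lt_or_gt_of_ne hne with hlt | hlt
        · have hbv : (v:ℕ).testBit j = false := by rwa [min_eq_left hlt.le] at hb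
          have hw2 : (w:ℕ) = (v:ℕ) + 2^j := by
            rw [min_eq_left hlt.le, max_eq_right hlt.le] at hm; exact hm
          rw [dif_neg (by simp [hbv])]
          exact Fin.ext (by simp [hw2])
        · have hbw : (w:ℕ).testBit j = false := by rwa [min_eq_right hlt.le] at hb
          have hv2 : (v:ℕ) = (w:ℕ) + 2^j := by
            rw [min_eq_right hlt.le, max_eq_left hlt.le] at hm; exact hm
          have hbv : (v:ℕ).testBit j = true := by rw [hv2]; exact testBit_add_pow_self hbw
          rw [dif_pos hbv]
          exact Fin.ext (by simp [hv2])
      case right_inv =>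
        intro j hj
        rw [Finset.mem_range] at hj
        have hpos := Nat.two_pow_pos j
        split_ifs with hb
        · obtain ⟨hle, hb'⟩ := testBit_sub_pow_self hb
          have h1 : max (v:ℕ) ((v:ℕ) - 2^j) = min (v:ℕ) ((v:ℕ) - 2^j) + 2^j := by
            rw [max_eq_left (Nat.sub_le _ _), min_eq_right (Nat.sub_le _ _)]
            omega
          simpa using log_of_diff h1
        · have h1 : max (v:ℕ) ((v:ℕ) + 2^j) = min (v:ℕ) ((v:ℕ) + 2^j) + 2^j := by
            rw [max_eq_right (Nat.le_add_right _ _), min_eq_left (Nat.le_add_right _ _)]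
          simpa using log_of_diff h1
    simpa using key
  · rw [← SimpleGraph.card_neighborFinset_eq_degree, Finset.card_eq_zero]
    ext w
    simp only [SimpleGraph.mem_neighborFinset, Finset.notMem_empty, iff_false]
    rintro ⟨h1, -⟩
    exact hv h1

lemma edge_count {i n : ℕ} (hn : 2^i ≤ n) :
    (cubeG i n).edgeSet.ncard = i * 2^(i-1) := by
  classical
  have hsum := SimpleGraph.sum_degrees_eq_twice_card_edges (cubeG i n)
  have hdeg : ∀ v : Fin n, (cubeG i n).degree v = if (v:ℕ) < 2^i then i else 0 :=
    fun v => degree_eq hn v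
  rw [Finset.sum_congr rfl (fun v _ => hdeg v)] at hsum
  rw [Finset.sum_ite, Finset.sum_const, Finset.sum_const_zero, add_zero,
    smul_eq_mul] at hsum
  have hcard : (Finset.univ.filter (fun v : Fin n => (v:ℕ) < 2^i)).card = 2^i := by
    have : (Finset.univ.filter (fun v : Fin n => (v:ℕ) < 2^i)).card
        = (Finset.range (2^i)).card := by
      apply Finset.card_bij'
        (i := fun (v : Fin n) (_ : v ∈ Finset.univ.filter (fun v : Fin n => (v:ℕ) < 2^i))
          => (v:ℕ))
        (j := fun (m : ℕ) (hm : m ∈ Finset.range (2^i)) =>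
          (⟨m, lt_of_lt_of_le (Finset.mem_range.mp hm) hn⟩ : Fin n))
      case hi =>
        intro v hv
        rw [Finset.mem_filter] at hv
        exact Finset.mem_range.mpr hv.2
      case hj =>
        intro m hm
        rw [Finset.mem_filter]
        exact ⟨Finset.mem_univ _, Finset.mem_range.mp hm⟩
      case left_inv => intro v hv; exact Fin.ext rfl
      case right_inv => intro m hm; rfl
    rwa [Finset.card_range] at this
  rw [hcard] at hsum
  have hmul : (2:ℕ)^i * i = 2 * (i * 2^(i-1)) := by
    cases i with
    | zero => simp
    | succ k => simp only [Nat.add_sub_cancel, pow_succ]; ring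
  rw [← SimpleGraph.coe_edgeFinset, Set.ncard_coe_finset]
  omega

def w0 : Fin P5_1342.nv := ⟨0, by decide⟩
def w1 : Fin P5_1342.nv := ⟨1, by decide⟩
def w2 : Fin P5_1342.nv := ⟨2, by decide⟩
def w3 : Fin P5_1342.nv := ⟨3, by decide⟩
def w4 : Fin P5_1342.nv := ⟨4, by decide⟩

/-- The hypercube with this labeling avoids `P_5^{1342}`. -/
lemma cube_avoids (i n : ℕ) : (EOGraph.mk n (cubeG i n) (cubeL i n)).Avoids P5_1342 := by
  rintro ⟨f, hadj, hord⟩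
  have a01 : P5_1342.graph.Adj w0 w1 := by
    show (SimpleGraph.fromRel _).Adj _ _
    refine (SimpleGraph.fromRel_adj ..).mpr ?_
    decide
  have a12 : P5_1342.graph.Adj w1 w2 := by
    show (SimpleGraph.fromRel _).Adj _ _
    refine (SimpleGraph.fromRel_adj ..).mpr ?_
    decide
  have a23 : P5_1342.graph.Adj w2 w3 := by
    show (SimpleGraph.fromRel _).Adj _ _
    refine (SimpleGraph.fromRel_adj ..).mpr ?_
    decide
  have a34 : P5_1342.graph.Adj w3 w4 := by
    show (SimpleGraph.fromRel _).Adj _ _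
    refine (SimpleGraph.fromRel_adj ..).mpr ?_
    decide
  obtain ⟨hA0, hA1, j1, hj1, hb1, hm1⟩ := hadj w0 w1 a01
  obtain ⟨hB1, hB2, j2, hj2, hb2, hm2⟩ := hadj w1 w2 a12
  obtain ⟨hC2, hC3, j3, hj3, hb3, hm3⟩ := hadj w2 w3 a23
  obtain ⟨hD3, hD4, j4, hj4, hb4, hm4⟩ := hadj w3 w4 a34
  -- the three label comparisons forced by the pattern 1342
  have L14 : cubeL i n s(f w0, f w1) < cubeL i n s(f w3, f w4) :=
    (hord w0 w1 w3 w4 a01 a34).mp (by decide)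
  have L42 : cubeL i n s(f w3, f w4) < cubeL i n s(f w1, f w2) :=
    (hord w3 w4 w1 w2 a34 a12).mp (by decide)
  have L23 : cubeL i n s(f w1, f w2) < cubeL i n s(f w2, f w3) :=
    (hord w1 w2 w2 w3 a12 a23).mp (by decide)
  rw [cubeL_eq hm1, cubeL_eq hm4] at L14
  rw [cubeL_eq hm4, cubeL_eq hm2] at L42
  rw [cubeL_eq hm2, cubeL_eq hm3] at L23
  have hmle1 : min (f w0:ℕ) (f w1:ℕ) ≤ 2^i - 1 := by omega
  have hmle2 : min (f w1:ℕ) (f w2:ℕ) ≤ 2^i - 1 := by omega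
  have hmle3 : min (f w2:ℕ) (f w3:ℕ) ≤ 2^i - 1 := by omega
  have hmle4 : min (f w3:ℕ) (f w4:ℕ) ≤ 2^i - 1 := by omega
  have h14 := label_lt_extract hj1 hj4 hmle1 hmle4 L14
  have h42 := label_lt_extract hj4 hj2 hmle4 hmle2 L42
  have h23 := label_lt_extract hj2 hj3 hmle2 hmle3 L23
  -- distinctness
  have hinj : ∀ x y : Fin P5_1342.nv, x ≠ y → (f x : ℕ) ≠ (f y : ℕ) := by
    intro x y hxy h
    exact hxy (f.injective (Fin.ext h))
  have hbd : (f w1 : ℕ) ≠ (f w3 : ℕ) := hinj _ _ (by decide)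
  have hce : (f w2 : ℕ) ≠ (f w4 : ℕ) := hinj _ _ (by decide)
  have hbe : (f w1 : ℕ) ≠ (f w4 : ℕ) := hinj _ _ (by decide)
  -- power facts
  have I23 : j2 < j3 → 2 * 2^j2 ≤ 2^j3 := by
    intro h
    calc 2 * 2^j2 = 2^(j2+1) := by ring
    _ ≤ 2^j3 := Nat.pow_le_pow_right (by norm_num) h
  have I43 : (2:ℕ)^j4 < 2^j3 → 2 * 2^j4 ≤ 2^j3 := by
    intro h
    have hj : j4 < j3 := by
      by_contra hc
      exact absurd (Nat.pow_le_pow_right (by norm_num) (not_lt.mp hc)) (not_le.mpr h)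
    calc 2 * 2^j4 = 2^(j4+1) := by ring
    _ ≤ 2^j3 := Nat.pow_le_pow_right (by norm_num) hj
  exact core (Nat.two_pow_pos j2) (Nat.two_pow_pos j3) (Nat.two_pow_pos j4)
    I23 I43 hm1 hm2 hm3 hm4 hbd hce hbe h14 h42 h23

end CubeAux

/-- For every `i` there is an edge-ordered graph with exactly `2^i`
vertices and `i·2^(i-1)` edges avoiding `P_5^{1342}`; consequently
`lex(n, P_5^{1342}) = Ω(n log n)`. -/
theorem lex_P5_1342_lower :
    (∀ i : ℕ, ∃ G : EOGraph, G.nv = 2 ^ i ∧ G.Valid ∧ G.edges = i * 2 ^ (i - 1) ∧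
      G.Avoids P5_1342) ∧
    ∃ c : ℝ, 0 < c ∧ ∀ n : ℕ, 2 ≤ n →
      c * (n : ℝ) * Real.logb 2 (n : ℝ) ≤ (lexFam n {P5_1342} : ℝ) := by
  constructor
  · intro i
    exact ⟨⟨2^i, CubeAux.cubeG i (2^i), CubeAux.cubeL i (2^i)⟩, rfl,
      CubeAux.cube_valid _ _, CubeAux.edge_count le_rfl, CubeAux.cube_avoids _ _⟩
  · refine ⟨1/8, by norm_num, ?_⟩
    intro n hn
    obtain ⟨i, hi1, h2i, hup⟩ : ∃ i, 1 ≤ i ∧ 2^i ≤ n ∧ n < 2^(i+1) :=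
      ⟨Nat.log 2 n,
        (Nat.le_log_iff_pow_le (by norm_num) (by omega)).mpr (by simpa using hn),
        Nat.pow_log_le_self 2 (by omega),
        Nat.lt_pow_succ_log_self (by norm_num) n⟩
    -- the natural-number lower bound on lexFam
    have hmem : i * 2^(i-1) ∈
        {m : ℕ | ∃ G : EOGraph, G.nv = n ∧ G.Valid ∧ G.AvoidsFam {P5_1342} ∧ G.edges = m} := by
      refine ⟨⟨n, CubeAux.cubeG i n, CubeAux.cubeL i n⟩, rfl, CubeAux.cube_valid _ _, ?_,
        CubeAux.edge_count h2i⟩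
      intro H hH
      rw [Set.mem_singleton_iff] at hH
      subst hH
      exact CubeAux.cube_avoids _ _
    have hbdd : BddAbove
        {m : ℕ | ∃ G : EOGraph, G.nv = n ∧ G.Valid ∧ G.AvoidsFam {P5_1342} ∧ G.edges = m} := by
      refine ⟨Nat.card (Sym2 (Fin n)), ?_⟩
      rintro m ⟨G, hnv, -, -, hedges⟩
      rw [← hedges]
      calc G.edges ≤ (Set.univ : Set (Sym2 (Fin G.nv))).ncard :=
            Set.ncard_le_ncard (Set.subset_univ _) Set.finite_univ
      _ = Nat.card (Sym2 (Fin G.nv)) := Set.ncard_univ _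
      _ = Nat.card (Sym2 (Fin n)) := by rw [hnv]
    have hle : i * 2^(i-1) ≤ lexFam n {P5_1342} := le_csSup hbdd hmem
    have hleR : ((i * 2^(i-1) : ℕ) : ℝ) ≤ (lexFam n {P5_1342} : ℝ) := Nat.cast_le.mpr hle
    refine le_trans ?_ hleR
    -- real arithmetic
    have hx0 : 0 ≤ Real.logb 2 n := Real.logb_nonneg (by norm_num) (by exact_mod_cast by omega)
    have hx2i : Real.logb 2 n ≤ 2 * i := by
      have h1 : Real.logb 2 n ≤ Real.logb 2 (2^(i+1) : ℕ) := by
        have hn0 : (0:ℝ) < (n:ℝ) := by exact_mod_cast (by omega : 0 < n)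
        exact Real.logb_le_logb_of_le (by norm_num) hn0 (by exact_mod_cast le_of_lt hup)
      have h2 : Real.logb 2 ((2:ℕ)^(i+1) : ℕ) = (i+1 : ℕ) := by
        push_cast
        rw [Real.logb_pow]
        simp [Real.logb_self_eq_one]
      rw [h2] at h1
      calc Real.logb 2 n ≤ ((i+1 : ℕ) : ℝ) := h1
      _ ≤ 2 * i := by
          have h3 : (1:ℝ) ≤ (i:ℝ) := by exact_mod_cast hi1
          push_cast
          linarith
    have hn4nat : n ≤ 4 * 2^(i-1) := by
      have h4 : (2:ℕ)^(i+1) = 4 * 2^(i-1) := by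
        cases i with
        | zero => omega
        | succ k => simp only [Nat.add_sub_cancel, pow_succ]; ring
      omega
    have hn4 : (n:ℝ) ≤ 4 * ((2:ℕ)^(i-1) : ℕ) := by exact_mod_cast hn4nat
    have hmain : (n:ℝ) * Real.logb 2 n ≤ (4 * ((2:ℕ)^(i-1) : ℕ) : ℝ) * (2 * i) :=
      mul_le_mul hn4 hx2i hx0 (by positivity)
    push_cast at hmain ⊢
    nlinarith [hmain]
end
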